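/- arXiv:1402.6377 — 10 statements merged into one kernel-verified Lean document; each statement's English description precedes it below -/
import Mathlib

section
/- Let d ≥ 1 and let f and f' be binary strings with |f| ≤ d and |f'| ≤ d. If the generalized Fibonacci cubes Q_d(f) and Q_d(f') are isomorphic as graphs, then |f| = |f'|. -/
/-- Two binary strings differ in exactly one position. -/
def cubeRel (v w : List Bool) : Prop :=
  (List.zipWith (fun a b => a != b) v w).count true = 1

/-- The generalized Fibonacci cube `Q_d(f)`: the subgraph of the `d`-cube induced on
binary strings of length `d` not containing `f` as a consecutive substring. -/
def genFib (d : ℕ) (f : List Bool) :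
    SimpleGraph {w : List Bool // w.length = d ∧ ¬ f <:+: w} :=
  SimpleGraph.fromRel fun v w => cubeRel v.1 w.1

/-- Hamming distance between binary strings (of equal length). -/
def hDist (v w : List Bool) : ℕ :=
  (List.zipWith (fun a b => a != b) v w).count true

/-- One less than the number of blocks of `f`: the number of indices `i ≥ 2`
with `f_{i-1} ≠ f_i`. -/
def nu (f : List Bool) : ℕ :=
  (List.zipWith (fun a b => a != b) f f.tail).count true

open Finset

namespace GF

/-- Fine–Wilf style lemma: if `x` has "periods" `a+1` and `b+1` on an interval of
length `a+b+1`, then `x a = x b`. -/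
lemma fw : ∀ (n a b : ℕ) (x : ℕ → Bool), a + b ≤ n →
    (∀ k, k < b → x k = x (k + a + 1)) →
    (∀ k, k < a → x k = x (k + b + 1)) →
    x a = x b := by
  intro n
  induction n with
  | zero =>
    intro a b x hab _ _
    have ha : a = 0 := by omega
    have hb : b = 0 := by omega
    subst ha; subst hb; rfl
  | succ n ih =>
    intro a b x hab h1 h2
    rcases lt_trichotomy a b with hlt | heq | hgt
    · -- a < b : recurse with (a, b - a - 1)
      have hb1 : b - a - 1 + a + 1 = b := by omega
      have key : x a = x (b - a - 1) := by
        apply ih a (b - a - 1) x (by omega)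
        · intro k hk
          exact h1 k (by omega)
        · intro k hk
          have e1 : x k = x (k + b + 1) := h2 k hk
          have e2 : x (k + (b - a - 1) + 1) = x ((k + (b - a - 1) + 1) + a + 1) :=
            h1 (k + (b - a - 1) + 1) (by omega)
          have e3 : (k + (b - a - 1) + 1) + a + 1 = k + b + 1 := by omega
          rw [e3] at e2
          rw [e1, ← e2]
      have : x (b - a - 1) = x b := by
        have := h1 (b - a - 1) (by omega)
        rwa [hb1] at this
      rw [key, this]
    · subst heq; rfl
    · -- symmetric
      have key : x b = x (a - b - 1) := by
        apply ih b (a - b - 1) x (by omega)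
        · intro k hk
          exact h2 k (by omega)
        · intro k hk
          have e1 : x k = x (k + a + 1) := h1 k hk
          have e2 : x (k + (a - b - 1) + 1) = x ((k + (a - b - 1) + 1) + b + 1) :=
            h2 (k + (a - b - 1) + 1) (by omega)
          have e3 : (k + (a - b - 1) + 1) + b + 1 = k + a + 1 := by omega
          rw [e3] at e2
          rw [e1, ← e2]
      have h4 : x (a - b - 1) = x a := by
        have := h2 (a - b - 1) (by omega)
        have e : a - b - 1 + b + 1 = a := by omega
        rwa [e] at this
      rw [key, h4]


open scoped Classical in
/-- All binary strings of length `n`. -/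
noncomputable def allB (n : ℕ) : Finset (List Bool) :=
  (Finset.univ : Finset (Fin n → Bool)).image List.ofFn

lemma mem_allB {w : List Bool} {n : ℕ} : w ∈ allB n ↔ w.length = n := by
  classical
  constructor
  · rintro hw
    simp only [allB, Finset.mem_image] at hw
    obtain ⟨g, _, rfl⟩ := hw
    simp
  · intro hw
    simp only [allB, Finset.mem_image]
    refine ⟨fun i => w.get (Fin.cast hw.symm i), Finset.mem_univ _, ?_⟩
    subst hw
    simp [List.ofFn_get]

lemma card_allB (n : ℕ) : (allB n).card = 2 ^ n := by
  classical
  rw [allB, Finset.card_image_of_injective _ List.ofFn_injective]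
  simp

open scoped Classical in
/-- The number of length-`n` binary strings avoiding `u` as a factor. -/
noncomputable def cnt (u : List Bool) (n : ℕ) : ℕ :=
  ((allB n).filter (fun w => ¬ u <:+: w)).card

lemma cnt_le_pow (u : List Bool) (n : ℕ) : cnt u n ≤ 2 ^ n := by
  classical
  rw [cnt, ← card_allB n]
  exact Finset.card_filter_le _ _

lemma cnt_of_lt {u : List Bool} {n : ℕ} (h : n < u.length) : cnt u n = 2 ^ n := by
  classical
  rw [cnt, ← card_allB n]
  congr 1
  apply Finset.filter_true_of_mem
  intro w hw
  intro hinf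
  have := hinf.length_le
  rw [mem_allB.mp hw] at this
  omega

lemma cnt_zero {u : List Bool} (hu : u ≠ []) : cnt u 0 = 1 := by
  have : (0:ℕ) < u.length := List.length_pos_iff.mpr hu
  rw [cnt_of_lt this]; rfl

/-- There is always at least one avoider: the constant string `!v.head`. -/
lemma one_le_cnt {v : List Bool} (hv : v ≠ []) (n : ℕ) : 1 ≤ cnt v n := by
  classical
  have : List.replicate n (!v.headI) ∈ (allB n).filter (fun w => ¬ v <:+: w) := by
    rw [Finset.mem_filter, mem_allB]
    refine ⟨by simp, ?_⟩
    intro hinf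
    have hmem : v.headI ∈ v := by
      cases v with
      | nil => exact absurd rfl hv
      | cons a t => simp
    have h2 : v.headI ∈ List.replicate n (!v.headI) := hinf.subset hmem
    have := List.eq_of_mem_replicate h2
    exact Bool.not_ne_self v.headI this.symm
  rw [cnt]
  exact Finset.card_pos.mpr ⟨_, this⟩

/-- Truncation injection: `cnt u (s+1) ≤ 2 * cnt u s`. -/
lemma cnt_succ_le {u : List Bool} (s : ℕ) : cnt u (s + 1) ≤ 2 * cnt u s := by
  classical
  have key : ((allB (s+1)).filter (fun w => ¬ u <:+: w)).card ≤
      (((allB s).filter (fun w => ¬ u <:+: w)) ×ˢ (Finset.univ : Finset Bool)).card := by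
    apply Finset.card_le_card_of_injOn (fun w => (w.dropLast, w.getLastD false))
    · intro w hw
      rw [Finset.mem_coe, Finset.mem_filter, mem_allB] at hw
      obtain ⟨hlen, havoid⟩ := hw
      rw [Finset.mem_coe, Finset.mem_product, Finset.mem_filter, mem_allB]
      refine ⟨⟨by simp [hlen], ?_⟩, Finset.mem_univ _⟩
      intro hinf
      exact havoid (hinf.trans (List.dropLast_prefix w).isInfix)
    · intro w1 h1 w2 h2 heq
      rw [Finset.mem_coe, Finset.mem_filter, mem_allB] at h1 h2
      have hne1 : w1 ≠ [] := by intro h; rw [h] at h1; simp at h1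
      have hne2 : w2 ≠ [] := by intro h; rw [h] at h2; simp at h2
      have e1 : w1.dropLast ++ [w1.getLastD false] = w1 := by
        rw [List.getLastD_eq_getLast? , List.getLast?_eq_getLast hne1]
        simp [List.dropLast_append_getLast hne1]
      have e2 : w2.dropLast ++ [w2.getLastD false] = w2 := by
        rw [List.getLastD_eq_getLast?, List.getLast?_eq_getLast hne2]
        simp [List.dropLast_append_getLast hne2]
      rw [← e1, ← e2]
      rw [Prod.mk.injEq] at heq
      rw [heq.1, heq.2]
  rw [cnt, cnt]
  calc ((allB (s+1)).filter _).card ≤ _ := key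
    _ = _ := by rw [Finset.card_product]; simp [mul_comm]

/-- Extension injection: `cnt u s ≤ cnt u (s+1)` (append the bit `!u.getLast`). -/
lemma cnt_mono_succ {u : List Bool} (hu : u ≠ []) (s : ℕ) : cnt u s ≤ cnt u (s + 1) := by
  classical
  rw [cnt, cnt]
  apply Finset.card_le_card_of_injOn (fun w => w ++ [!(u.getLast hu)])
  · intro w hw
    rw [Finset.mem_coe, Finset.mem_filter, mem_allB] at hw ⊢
    obtain ⟨hlen, havoid⟩ := hw
    refine ⟨by simp [hlen], ?_⟩
    intro hinf
    -- u infix of w ++ [c] : either infix of w, or suffix of w ++ [c]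
    obtain ⟨x, y, hxy⟩ := hinf
    rcases List.eq_nil_or_concat y with rfl | ⟨y', c', rfl⟩
    · -- suffix case: last of u = !u.getLast, contradiction
      rw [List.append_nil] at hxy
      -- x ++ u = w ++ [!getLast]
      have hu2 : u.dropLast ++ [u.getLast hu] = u := List.dropLast_append_getLast hu
      have : (x ++ u.dropLast) ++ [u.getLast hu] = w ++ [!(u.getLast hu)] := by
        rw [List.append_assoc, hu2, hxy]
      have := (List.append_inj' this (by simp)).2
      simp at this
    · -- u infix of w
      rw [List.concat_eq_append] at hxy
      have : (x ++ u ++ y') ++ [c'] = w ++ [!(u.getLast hu)] := by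
        rw [← show x ++ u ++ (y' ++ [c']) = w ++ [!(u.getLast hu)] from hxy]; simp
      have h2 := (List.append_inj' this (by simp)).1
      exact havoid ⟨x, y', h2⟩
  · intro w1 _ w2 _ heq
    exact (List.append_left_injective _) heq


lemma getD_dropLast {l : List Bool} {j : ℕ} (h : j + 1 < l.length) :
    l.dropLast.getD j false = l.getD j false := by
  rw [List.dropLast_eq_take]
  simp only [List.getD_eq_getElem?_getD, List.getElem?_take]
  rw [if_pos (by omega)]

/-- Occurrence analysis for `u <:+: p ++ β :: u.dropLast` with `p` avoiding `u`. -/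
lemma occ_analysis {u p : List Bool} {β : Bool} (hu : u ≠ []) (hp : ¬ u <:+: p)
    (hocc : u <:+: p ++ β :: u.dropLast) :
    ∃ t, t < u.length ∧ t ≤ p.length ∧ u.getD t false = β ∧
      (∀ k, k < t → p.getD (p.length - t + k) false = u.getD k false) ∧
      (∀ k, t < k → k < u.length → u.getD k false = u.getD (k - t - 1) false) := by
  obtain ⟨x, y, hxy⟩ := hocc
  set m := u.length with hm
  set L := p.length with hL
  set i := x.length with hi
  have hm1 : 1 ≤ m := List.length_pos_iff.mpr hu
  have hlen : i + m + y.length = L + m := by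
    have := congrArg List.length hxy
    simp [m, L, i] at this ⊢
    omega
  -- case: occurrence entirely inside p : contradiction
  by_cases hcase : i + m ≤ L
  · exfalso
    apply hp
    refine ⟨x, y.take (L - i - m), ?_⟩
    have h1 : (p ++ β :: u.dropLast).take L = p := List.take_left' rfl
    have h2 : (x ++ u ++ y).take L = (x ++ u) ++ y.take (L - i - m) := by
      rw [List.take_append,
        List.take_of_length_le (by simp [List.length_append]; omega)]
      congr 2
      simp only [List.length_append]
      omega
    rw [← h2, hxy, h1]
  · push_neg at hcase
    have hiL : i ≤ L := by omega
    have key : ∀ k, k < m → u.getD k false = (p ++ β :: u.dropLast).getD (i + k) false := by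
      intro k hk
      rw [← hxy, List.append_assoc, List.getD_append_right _ _ _ _ (by omega),
        show i + k - i = k by omega, List.getD_append _ _ _ _ (by omega)]
    refine ⟨L - i, by omega, by omega, ?_, ?_, ?_⟩
    · have := key (L - i) (by omega)
      rw [show i + (L - i) = L by omega,
        List.getD_append_right _ _ _ _ (le_refl _)] at this
      simpa using this
    · intro k hk
      have := key k (by omega)
      rw [List.getD_append _ _ _ _ (by omega)] at this
      rw [show L - (L - i) + k = i + k by omega]
      exact this.symm
    · intro k hk1 hk2
      have := key k (by omega)
      rw [List.getD_append_right _ _ _ _ (by omega)] at this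
      have e1 : i + k - L = k - (L - i) := by omega
      rw [e1] at this
      rw [show k - (L-i) = (k - (L-i) - 1) + 1 by omega] at this
      rw [List.getD_cons_succ] at this
      rw [getD_dropLast (by omega)] at this
      exact this

/-- Core claim: every avoider `p` extends by some bit `β` so that `p ++ β :: u.dropLast`
still avoids `u`. -/
lemma exists_beta {u p : List Bool} (hu : u ≠ []) (hp : ¬ u <:+: p) :
    ∃ β, ¬ u <:+: (p ++ β :: u.dropLast) := by
  by_contra hcon
  push_neg at hcon
  obtain ⟨t₀, ht₀m, ht₀L, ht₀β, hsuf₀, hper₀⟩ := occ_analysis hu hp (hcon false)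
  obtain ⟨t₁, ht₁m, ht₁L, ht₁β, hsuf₁, hper₁⟩ := occ_analysis hu hp (hcon true)
  have hne : t₀ ≠ t₁ := by
    intro h; rw [h, ht₁β] at ht₀β; simp at ht₀β
  set m := u.length
  set L := p.length
  -- helper: for t < T with facts, u.getD t = u.getD T
  have helper : ∀ t T : ℕ, t < T → T < m → T ≤ L →
      (∀ k, k < T → p.getD (L - T + k) false = u.getD k false) →
      (∀ k, k < t → p.getD (L - t + k) false = u.getD k false) →
      (∀ k, t < k → k < m → u.getD k false = u.getD (k - t - 1) false) →
      u.getD t false = u.getD T false := by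
    intro t T htT hTm hTL sufT suft pert
    set x : ℕ → Bool := fun n => u.getD n false with hx
    have D1 : ∀ k, k < t → x k = x (k + (T - t)) := by
      intro k hk
      have e1 : x k = p.getD (L - t + k) false := (suft k hk).symm
      have e2 : x (k + (T - t)) = p.getD (L - T + (k + (T - t))) false :=
        (sufT (k + (T - t)) (by omega)).symm
      rw [show L - T + (k + (T - t)) = L - t + k by omega] at e2
      rw [e1, e2]
    have perF : ∀ j, j + t + 1 < m → x (j + t + 1) = x j := by
      intro j hj
      have h := pert (j + t + 1) (by omega) hj
      rw [show j + t + 1 - t - 1 = j by omega] at h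
      exact h
    have main : x t = x (T - t - 1) := by
      apply fw (t + (T - t - 1)) t (T - t - 1) x (le_refl _)
      · intro k hk
        exact (perF k (by omega)).symm
      · intro k hk
        have := D1 k hk
        rw [show k + (T - t - 1) + 1 = k + (T - t) by omega]
        exact this
    have last : x T = x (T - t - 1) := pert T htT hTm
    show x t = x T
    exact main.trans last.symm
  rcases lt_or_gt_of_ne hne with h | h
  · have := helper t₀ t₁ h ht₁m ht₁L hsuf₁ hsuf₀ hper₀
    rw [ht₀β, ht₁β] at this
    simp at this
  · have := helper t₁ t₀ h ht₀m ht₀L hsuf₀ hsuf₁ hper₁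
    rw [ht₀β, ht₁β] at this
    simp at this


open scoped Classical

lemma suffix_of_concat_infix {v z : List Bool} {c : Bool} (hv : v ≠ [])
    (h : v <:+: z ++ [c]) (hz : ¬ v <:+: z) :
    ∃ x, x ++ v.dropLast = z ∧ v.getLast hv = c := by
  obtain ⟨x, y, hxy⟩ := h
  rcases List.eq_nil_or_concat y with rfl | ⟨y', c', rfl⟩
  · rw [List.append_nil] at hxy
    have hd : (x ++ v.dropLast) ++ [v.getLast hv] = z ++ [c] := by
      rw [List.append_assoc, List.dropLast_append_getLast hv, hxy]
    obtain ⟨h1, h2⟩ := List.append_inj' hd (by simp)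
    exact ⟨x, h1, by simpa using h2⟩
  · exfalso
    apply hz
    rw [List.concat_eq_append, ← List.append_assoc] at hxy
    obtain ⟨h1, -⟩ := List.append_inj' hxy (by simp)
    exact ⟨x, y', by rw [← h1]⟩

/-- The `(★)` inequality: `cnt u (s+1) + cnt u (s - m) ≤ 2 * cnt u s` for `s ≥ m`. -/
lemma star {u : List Bool} (hu : u ≠ []) {s : ℕ} (hs : u.length ≤ s) :
    cnt u (s + 1) + cnt u (s - u.length) ≤ 2 * cnt u s := by
  set m := u.length with hm
  have hm1 : 1 ≤ m := List.length_pos_iff.mpr hu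
  set F : ℕ → Finset (List Bool) := fun n => (allB n).filter (fun w => ¬ u <:+: w) with hF
  set f₁ : List Bool → List Bool × Bool := fun w => (w.dropLast, w.getLastD false) with hf₁
  set bc : List Bool → Bool := fun p => if u <:+: (p ++ false :: u.dropLast) then true else false
    with hbc
  set f₂ : List Bool → List Bool × Bool := fun p => (p ++ bc p :: u.dropLast, u.getLast hu)
    with hf₂
  -- the chosen extension avoids u
  have hbc_avoid : ∀ p, ¬ u <:+: p → ¬ u <:+: (p ++ bc p :: u.dropLast) := by
    intro p hp
    simp only [hbc]
    split_ifs with h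
    · obtain ⟨β, hβ⟩ := exists_beta hu hp
      cases β
      · exact absurd h hβ
      · exact hβ
    · exact h
  -- key list identity
  have hkey : ∀ p b, (p ++ b :: u.dropLast) ++ [u.getLast hu] = p ++ b :: u := by
    intro p b
    rw [List.append_assoc]
    congr 1
    rw [List.cons_append, List.dropLast_append_getLast hu]
  have hS₁mem : ∀ w ∈ F (s+1), f₁ w ∈ (F s) ×ˢ (univ : Finset Bool) := by
    intro w hw
    rw [hF, Finset.mem_filter, mem_allB] at hw
    rw [Finset.mem_product, hF, Finset.mem_filter, mem_allB]
    exact ⟨⟨by simp [f₁, hw.1], fun hinf => hw.2 (hinf.trans (List.dropLast_prefix w).isInfix)⟩,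
      Finset.mem_univ _⟩
  have hS₂mem : ∀ p ∈ F (s - m), f₂ p ∈ (F s) ×ˢ (univ : Finset Bool) := by
    intro p hp
    rw [hF, Finset.mem_filter, mem_allB] at hp
    rw [Finset.mem_product, hF, Finset.mem_filter, mem_allB]
    refine ⟨⟨?_, hbc_avoid p hp.2⟩, Finset.mem_univ _⟩
    simp only [f₂, List.length_append, List.length_cons, List.length_dropLast, hp.1]
    omega
  have hinj₁ : Set.InjOn f₁ (F (s+1)) := by
    intro w1 h1 w2 h2 heq
    rw [Finset.mem_coe, hF, Finset.mem_filter, mem_allB] at h1 h2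
    have hne1 : w1 ≠ [] := by intro h; rw [h] at h1; simp at h1
    have hne2 : w2 ≠ [] := by intro h; rw [h] at h2; simp at h2
    have e1 : w1.dropLast ++ [w1.getLastD false] = w1 := by
      rw [List.getLastD_eq_getLast?, List.getLast?_eq_getLast hne1]
      exact List.dropLast_append_getLast hne1
    have e2 : w2.dropLast ++ [w2.getLastD false] = w2 := by
      rw [List.getLastD_eq_getLast?, List.getLast?_eq_getLast hne2]
      exact List.dropLast_append_getLast hne2
    rw [Prod.mk.injEq] at heq
    rw [← e1, ← e2, heq.1, heq.2]
  have hinj₂ : Set.InjOn f₂ (F (s - m)) := by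
    intro p1 h1 p2 h2 heq
    rw [Finset.mem_coe, hF, Finset.mem_filter, mem_allB] at h1 h2
    rw [Prod.mk.injEq] at heq
    exact (List.append_inj heq.1 (h1.1.trans h2.1.symm)).1
  -- the two images are disjoint
  have hdisj : Disjoint ((F (s+1)).image f₁) ((F (s - m)).image f₂) := by
    rw [Finset.disjoint_left]
    rintro ⟨z, c⟩ hz1 hz2
    rw [Finset.mem_image] at hz1 hz2
    obtain ⟨w, hw, hww⟩ := hz1
    obtain ⟨p, hp, hpp⟩ := hz2
    rw [hF, Finset.mem_filter, mem_allB] at hw hp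
    rw [hf₁, Prod.mk.injEq] at hww
    rw [hf₂, Prod.mk.injEq] at hpp
    -- z ++ [c] equals w (avoids u) and equals p ++ bc p :: u (contains u)
    have hne1 : w ≠ [] := by intro h; rw [h] at hw; simp at hw
    have ew : z ++ [c] = w := by
      rw [← hww.1, ← hww.2, List.getLastD_eq_getLast?, List.getLast?_eq_getLast hne1]
      exact List.dropLast_append_getLast hne1
    have ep : z ++ [c] = p ++ bc p :: u := by
      rw [← hpp.1, ← hpp.2]
      exact hkey p (bc p)
    apply hw.2
    rw [← ew, ep]
    exact ⟨p ++ [bc p], [], by simp⟩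
  have hcard₁ : ((F (s+1)).image f₁).card = cnt u (s+1) :=
    Finset.card_image_of_injOn hinj₁
  have hcard₂ : ((F (s - m)).image f₂).card = cnt u (s - m) :=
    Finset.card_image_of_injOn hinj₂
  have hsub : ((F (s+1)).image f₁) ∪ ((F (s - m)).image f₂) ⊆ (F s) ×ˢ (univ : Finset Bool) := by
    intro q hq
    rw [Finset.mem_union] at hq
    rcases hq with hq | hq <;> rw [Finset.mem_image] at hq <;> obtain ⟨w, hw, rfl⟩ := hq
    · exact hS₁mem w hw
    · exact hS₂mem w hw
  calc cnt u (s+1) + cnt u (s - m)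
      = ((F (s+1)).image f₁).card + ((F (s - m)).image f₂).card := by rw [hcard₁, hcard₂]
    _ = (((F (s+1)).image f₁) ∪ ((F (s - m)).image f₂)).card :=
        (Finset.card_union_of_disjoint hdisj).symm
    _ ≤ ((F s) ×ˢ (univ : Finset Bool)).card := Finset.card_le_card hsub
    _ = 2 * cnt u s := by
        rw [Finset.card_product, Finset.card_univ]
        simp [cnt, mul_comm, F]

/-- The `L4` inequality: `2 * cnt v s ≤ cnt v (s+1) + cnt v (s + 1 - m')`. -/
lemma two_cnt_le {v : List Bool} (hv : v ≠ []) {s : ℕ} (hs : v.length ≤ s + 1) :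
    2 * cnt v s ≤ cnt v (s + 1) + cnt v (s + 1 - v.length) := by
  set m := v.length with hm
  have hm1 : 1 ≤ m := List.length_pos_iff.mpr hv
  set F : ℕ → Finset (List Bool) := fun n => (allB n).filter (fun w => ¬ v <:+: w) with hF
  set Z := (F s) ×ˢ (univ : Finset Bool) with hZ
  set Z₁ := Z.filter (fun q : List Bool × Bool => ¬ v <:+: q.1 ++ [q.2]) with hZ₁
  set Z₂ := Z.filter (fun q : List Bool × Bool => v <:+: q.1 ++ [q.2]) with hZ₂
  have hsplit : Z₂.card + Z₁.card = Z.card := by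
    rw [hZ₁, hZ₂]
    exact Finset.card_filter_add_card_filter_not
      (fun q : List Bool × Bool => v <:+: q.1 ++ [q.2])
  have hZcard : Z.card = 2 * cnt v s := by
    rw [hZ, Finset.card_product, Finset.card_univ]
    simp [cnt, mul_comm, F]
  have h1 : Z₁.card ≤ cnt v (s + 1) := by
    apply Finset.card_le_card_of_injOn (fun q => q.1 ++ [q.2])
    · rintro ⟨z, c⟩ hq
      rw [Finset.mem_coe, hZ₁, Finset.mem_filter, hZ, Finset.mem_product, hF, Finset.mem_filter, mem_allB] at hq
      rw [Finset.mem_coe, Finset.mem_filter, mem_allB]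
      exact ⟨by simp [hq.1.1.1], hq.2⟩
    · rintro ⟨z1, c1⟩ _ ⟨z2, c2⟩ _ heq
      obtain ⟨e1, e2⟩ := List.append_inj' heq (by simp)
      simp at e2
      rw [Prod.mk.injEq]
      exact ⟨e1, e2⟩
  have h2 : Z₂.card ≤ cnt v (s + 1 - m) := by
    apply Finset.card_le_card_of_injOn (fun q => (q.1 ++ [q.2]).take (s + 1 - m))
    · rintro ⟨z, c⟩ hq
      rw [Finset.mem_coe, hZ₂, Finset.mem_filter, hZ, Finset.mem_product, hF, Finset.mem_filter, mem_allB] at hq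
      obtain ⟨⟨⟨hlen, havoid⟩, -⟩, hocc⟩ := hq
      dsimp only at hlen havoid hocc ⊢
      obtain ⟨x, hx1, hx2⟩ := suffix_of_concat_infix hv hocc havoid
      have hxlen : x.length = s + 1 - m := by
        have := congrArg List.length hx1
        simp only [List.length_append, List.length_dropLast] at this
        rw [← hm] at this
        omega
      have hxz : (z ++ [c]).take (s + 1 - m) = x := by
        have : z ++ [c] = x ++ v := by
          rw [← List.dropLast_append_getLast hv, ← List.append_assoc, hx1, hx2]
        rw [this]
        exact List.take_left' hxlen
      rw [hxz, Finset.mem_coe, Finset.mem_filter, mem_allB]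
      refine ⟨hxlen, fun hinf => havoid ?_⟩
      exact hinf.trans (⟨[], v.dropLast, by simpa using hx1⟩ : x <:+: z)
    · rintro ⟨z1, c1⟩ hq1 ⟨z2, c2⟩ hq2 heq
      rw [Finset.mem_coe, hZ₂, Finset.mem_filter, hZ, Finset.mem_product, hF,
        Finset.mem_filter, mem_allB] at hq1 hq2
      obtain ⟨⟨⟨hlen1, havoid1⟩, -⟩, hocc1⟩ := hq1
      obtain ⟨⟨⟨hlen2, havoid2⟩, -⟩, hocc2⟩ := hq2
      dsimp only at hlen1 havoid1 hocc1 hlen2 havoid2 hocc2 heq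
      obtain ⟨x1, hx11, hx12⟩ := suffix_of_concat_infix hv hocc1 havoid1
      obtain ⟨x2, hx21, hx22⟩ := suffix_of_concat_infix hv hocc2 havoid2
      have e1 : z1 ++ [c1] = x1 ++ v := by
        rw [← List.dropLast_append_getLast hv, ← List.append_assoc, hx11, hx12]
      have e2 : z2 ++ [c2] = x2 ++ v := by
        rw [← List.dropLast_append_getLast hv, ← List.append_assoc, hx21, hx22]
      have hx1len : x1.length = s + 1 - m := by
        have := congrArg List.length hx11
        simp only [List.length_append, List.length_dropLast] at this
        rw [← hm] at this; omega
      have hx2len : x2.length = s + 1 - m := by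
        have := congrArg List.length hx21
        simp only [List.length_append, List.length_dropLast] at this
        rw [← hm] at this; omega
      rw [e1, e2, List.take_left' hx1len, List.take_left' hx2len] at heq
      have : z1 ++ [c1] = z2 ++ [c2] := by rw [e1, e2, heq]
      obtain ⟨g1, g2⟩ := List.append_inj' this (by simp)
      simp at g2
      rw [Prod.mk.injEq]
      exact ⟨g1, g2⟩
  omega


lemma cnt_at_len {u : List Bool} (hu : u ≠ []) :
    cnt u u.length + 1 ≤ 2 * cnt u (u.length - 1) := by
  have hm1 : 1 ≤ u.length := List.length_pos_iff.mpr hu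
  have h1 : cnt u u.length < 2 ^ u.length := by
    rw [cnt, ← card_allB u.length]
    apply Finset.card_lt_card
    rw [Finset.ssubset_iff_of_subset (Finset.filter_subset _ _)]
    refine ⟨u, mem_allB.mpr rfl, ?_⟩
    rw [Finset.mem_filter]
    push_neg
    intro _
    exact List.infix_refl u
  have h2 : cnt u (u.length - 1) = 2 ^ (u.length - 1) := cnt_of_lt (by omega)
  rw [h2]
  have : 2 * 2 ^ (u.length - 1) = 2 ^ u.length := by
    rw [← pow_succ']
    congr 1
    omega
  omega

lemma cnt_nil (d : ℕ) : cnt ([] : List Bool) d = 0 := by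
  rw [cnt]
  rw [Finset.card_eq_zero, Finset.filter_eq_empty_iff]
  intro w _
  simp [List.nil_infix]

lemma card_subtype (g : List Bool) (d : ℕ) :
    Nat.card {w : List Bool // w.length = d ∧ ¬ g <:+: w} = cnt g d := by
  have e : {w : List Bool // w.length = d ∧ ¬ g <:+: w} ≃
      {w : List Bool // w ∈ (allB d).filter (fun w => ¬ g <:+: w)} := by
    apply Equiv.subtypeEquivRight
    intro w
    rw [Finset.mem_filter, mem_allB]
  rw [Nat.card_congr e, Nat.card_eq_fintype_card, Fintype.card_coe, cnt]


lemma cnt_mono {u : List Bool} (hu : u ≠ []) {a b : ℕ} (h : a ≤ b) :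
    cnt u a ≤ cnt u b := by
  induction b with
  | zero => simpa [Nat.le_zero.mp h]
  | succ n ih =>
    rcases Nat.lt_or_ge a (n+1) with h' | h'
    · exact (ih (by omega)).trans (cnt_mono_succ hu n)
    · have : a = n + 1 := by omega
      rw [this]

/-- Main counting inequality: longer forbidden factors leave strictly more avoiders. -/
theorem cnt_lt_cnt {u v : List Bool} (hu : 1 ≤ u.length) (huv : u.length < v.length)
    {d : ℕ} (hvd : v.length ≤ d) : cnt u d < cnt v d := by
  have hune : u ≠ [] := by intro h; rw [h] at hu; simp at hu
  have hvne : v ≠ [] := by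
    intro h; rw [h] at huv; simp at huv
  set m := u.length with hm
  set m' := v.length with hm'
  set A : ℕ → ℕ := cnt u with hA
  set B : ℕ → ℕ := cnt v with hB
  -- termwise inequality 1 (u side)
  have term1 : ∀ s, s < d →
      B (d-1-s) * A (s+1) + (if m'-1 ≤ s then B (d-1-s) * A (s+1-m') else 0)
        + (if s = m-1 then B (d-1-s) else 0) ≤ 2 * (B (d-1-s) * A s) := by
    intro s _
    rcases eq_or_ne s (m-1) with rfl | hsm
    · rw [if_neg (by omega), if_pos rfl]
      have h1 : A (m-1+1) + 1 ≤ 2 * A (m-1) := by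
        have := cnt_at_len hune
        rw [show m - 1 + 1 = m by omega]
        exact this
      calc B (d-1-(m-1)) * A (m-1+1) + 0 + B (d-1-(m-1))
          = B (d-1-(m-1)) * (A (m-1+1) + 1) := by ring
        _ ≤ B (d-1-(m-1)) * (2 * A (m-1)) := Nat.mul_le_mul_left _ h1
        _ = 2 * (B (d-1-(m-1)) * A (m-1)) := by ring
    · rw [if_neg hsm]
      rcases Nat.lt_or_ge s (m'-1) with h' | h'
      · rw [if_neg (by omega)]
        calc B (d-1-s) * A (s+1) + 0 = B (d-1-s) * A (s+1) := by ring
          _ ≤ B (d-1-s) * (2 * A s) := Nat.mul_le_mul_left _ (cnt_succ_le s)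
          _ = 2 * (B (d-1-s) * A s) := by ring
      · rw [if_pos h']
        have hstar : A (s+1) + A (s+1-m') ≤ 2 * A s := by
          have h1 : A (s+1-m') ≤ A (s - m) := cnt_mono hune (by omega)
          have h2 := star hune (s := s) (by omega)
          rw [← hm, ← hA] at h2
          omega
        calc B (d-1-s) * A (s+1) + B (d-1-s) * A (s+1-m') + 0
            = B (d-1-s) * (A (s+1) + A (s+1-m')) := by ring
          _ ≤ B (d-1-s) * (2 * A s) := Nat.mul_le_mul_left _ hstar
          _ = 2 * (B (d-1-s) * A s) := by ring
  -- termwise inequality 2 (v side)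
  have term2 : ∀ s, s < d →
      2 * (A (d-1-s) * B s) ≤ A (d-1-s) * B (s+1)
        + (if m'-1 ≤ s then A (d-1-s) * B (s+1-m') else 0) := by
    intro s _
    rcases Nat.lt_or_ge s (m'-1) with h' | h'
    · rw [if_neg (by omega)]
      have e1 : B s = 2 ^ s := cnt_of_lt (by omega)
      have e2 : B (s+1) = 2 ^ (s+1) := cnt_of_lt (by omega)
      rw [e1, e2]
      have : 2 * (A (d-1-s) * 2 ^ s) = A (d-1-s) * 2 ^ (s+1) := by rw [pow_succ]; ring
      omega
    · rw [if_pos h']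
      have h2 := two_cnt_le hvne (s := s) (by omega)
      rw [← hm', ← hB] at h2
      calc 2 * (A (d-1-s) * B s) = A (d-1-s) * (2 * B s) := by ring
        _ ≤ A (d-1-s) * (B (s+1) + B (s+1-m')) := Nat.mul_le_mul_left _ h2
        _ = A (d-1-s) * B (s+1) + A (d-1-s) * B (s+1-m') := by ring
  -- named sums
  set P : ℕ := ∑ s ∈ range d, B (d-1-s) * A (s+1) with hP
  set R : ℕ := ∑ s ∈ range d, B (d-1-s) * A s with hR
  set Pb : ℕ := ∑ s ∈ range d, A (d-1-s) * B (s+1) with hPb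
  set Rb : ℕ := ∑ s ∈ range d, A (d-1-s) * B s with hRb
  set Q : ℕ := ∑ t ∈ range (d-m'+1), B (d-m'-t) * A t with hQ
  set Qb : ℕ := ∑ t ∈ range (d-m'+1), A (d-m'-t) * B t with hQb
  have hmd : m - 1 < d := by omega
  -- the ite-sums
  have iteQ : ∑ s ∈ range d, (if m'-1 ≤ s then B (d-1-s) * A (s+1-m') else 0) = Q := by
    rw [← Finset.sum_filter]
    have hfilter : (range d).filter (fun s => m'-1 ≤ s) = Finset.Ico (m'-1) d := by
      ext s
      simp [Finset.mem_filter, Finset.mem_range, Finset.mem_Ico]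
      omega
    rw [hfilter, Finset.sum_Ico_eq_sum_range]
    rw [show d - (m'-1) = d - m' + 1 by omega]
    apply Finset.sum_congr rfl
    intro t ht
    rw [Finset.mem_range] at ht
    have e1 : d - 1 - (m' - 1 + t) = d - m' - t := by omega
    have e2 : m' - 1 + t + 1 - m' = t := by omega
    rw [e1, e2]
  have iteB : ∑ s ∈ range d, (if s = m-1 then B (d-1-s) else 0) = B (d-m) := by
    rw [Finset.sum_ite_eq' (range d) (m-1) (fun s => B (d-1-s))]
    rw [if_pos (Finset.mem_range.mpr hmd)]
    congr 1
    omega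
  have iteQb : ∑ s ∈ range d, (if m'-1 ≤ s then A (d-1-s) * B (s+1-m') else 0) = Qb := by
    rw [← Finset.sum_filter]
    have hfilter : (range d).filter (fun s => m'-1 ≤ s) = Finset.Ico (m'-1) d := by
      ext s
      simp [Finset.mem_filter, Finset.mem_range, Finset.mem_Ico]
      omega
    rw [hfilter, Finset.sum_Ico_eq_sum_range]
    rw [show d - (m'-1) = d - m' + 1 by omega]
    apply Finset.sum_congr rfl
    intro t ht
    rw [Finset.mem_range] at ht
    have e1 : d - 1 - (m' - 1 + t) = d - m' - t := by omega
    have e2 : m' - 1 + t + 1 - m' = t := by omega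
    rw [e1, e2]
  -- step A
  have stepA : P + Q + B (d-m) ≤ 2 * R := by
    have := Finset.sum_le_sum (fun s hs => term1 s (Finset.mem_range.mp hs))
    rw [Finset.sum_add_distrib, Finset.sum_add_distrib, iteQ, iteB] at this
    rw [← Finset.mul_sum] at this
    exact this
  -- step B
  have stepB : 2 * Rb ≤ Pb + Qb := by
    have := Finset.sum_le_sum (fun s hs => term2 s (Finset.mem_range.mp hs))
    rw [Finset.sum_add_distrib, iteQb, ← Finset.mul_sum] at this
    exact this
  -- R = Rb
  have hRRb : R = Rb := by
    rw [hR, hRb, ← Finset.sum_range_reflect (fun s => A (d-1-s) * B s) d]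
    apply Finset.sum_congr rfl
    intro s hs
    rw [Finset.mem_range] at hs
    rw [show d - 1 - (d - 1 - s) = s by omega, mul_comm]
  -- Q = Qb
  have hQQb : Q = Qb := by
    rw [hQ, hQb, ← Finset.sum_range_reflect (fun t => A (d-m'-t) * B t) (d-m'+1)]
    apply Finset.sum_congr rfl
    intro t ht
    rw [Finset.mem_range] at ht
    rw [show d - m' + 1 - 1 - t = d - m' - t by omega,
      show d - m' - (d - m' - t) = t by omega, mul_comm]
  -- trivial master identity
  have master : B d + P = A d + Pb := by
    have e1 : ∑ s ∈ range d, B (d-(s+1)) * A (s+1) = P := by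
      apply Finset.sum_congr rfl
      intro s hs
      rw [Finset.mem_range] at hs
      rw [show d - (s+1) = d - 1 - s by omega]
    have lhs : ∑ j ∈ range (d+1), B (d-j) * A j = P + B d := by
      rw [Finset.sum_range_succ' (fun j => B (d-j) * A j) d]
      have hA0 : A 0 = 1 := cnt_zero hune
      rw [show d - 0 = d by omega, hA0, mul_one, e1]
    have e2 : ∑ s ∈ range d, B (d - (d + 1 - 1 - (s+1))) * A (d+1-1-(s+1)) = Pb := by
      apply Finset.sum_congr rfl
      intro s hs
      rw [Finset.mem_range] at hs
      rw [show d + 1 - 1 - (s+1) = d - 1 - s by omega,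
        show d - (d - 1 - s) = s + 1 by omega, mul_comm]
    have rhs : ∑ j ∈ range (d+1), B (d-j) * A j = Pb + A d := by
      rw [← Finset.sum_range_reflect (fun j => B (d-j) * A j) (d+1)]
      rw [Finset.sum_range_succ' (fun j => B (d - (d + 1 - 1 - j)) * A (d+1-1-j)) d]
      have hB0 : B 0 = 1 := cnt_zero hvne
      rw [show d + 1 - 1 - 0 = d by omega, show d - d = 0 by omega, hB0, one_mul, e2]
    omega
  -- assemble
  have hone : 1 ≤ B (d - m) := one_le_cnt hvne _
  omega

end GF

theorem stmt0 (d : ℕ) (hd : 1 ≤ d) (f f' : List Bool)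
    (hf : f.length ≤ d) (hf' : f'.length ≤ d)
    (h : Nonempty (genFib d f ≃g genFib d f')) :
    f.length = f'.length := by
  obtain ⟨iso⟩ := h
  have hcard : GF.cnt f d = GF.cnt f' d := by
    have := Nat.card_congr iso.toEquiv
    rwa [GF.card_subtype, GF.card_subtype] at this
  by_contra hne
  rcases Nat.lt_or_ge f.length f'.length with hlt | hge
  · rcases Nat.eq_zero_or_pos f.length with h0 | hpos
    · have hf0 : f = [] := List.length_eq_zero_iff.mp h0
      have h1 : GF.cnt f d = 0 := by rw [hf0]; exact GF.cnt_nil d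
      have hf'ne : f' ≠ [] := by intro hh; rw [hh] at hlt; simp at hlt
      have := GF.one_le_cnt hf'ne d
      omega
    · exact absurd hcard (Nat.ne_of_lt (GF.cnt_lt_cnt hpos hlt hf'))
  · have hlt : f'.length < f.length := by omega
    rcases Nat.eq_zero_or_pos f'.length with h0 | hpos
    · have hf0 : f' = [] := List.length_eq_zero_iff.mp h0
      have h1 : GF.cnt f' d = 0 := by rw [hf0]; exact GF.cnt_nil d
      have hfne : f ≠ [] := by intro hh; rw [hh] at hlt; simp at hlt
      have := GF.one_le_cnt hfne d
      omega
    · exact absurd hcard.symm (Nat.ne_of_lt (GF.cnt_lt_cnt hpos hlt hf))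
end

section
/- For every integer k ≥ 2 and every d with 1 ≤ d ≤ 3k−1, the generalized Fibonacci cubes Q_d(0^k 1^k) and Q_d(0^{k+1} 1^{k−1}) are isomorphic. -/
namespace Stmt1Aux

/-- remove the bit at position `k+m`, complement it, insert it at position `k`. -/
def sig (k m : ℕ) (w : List Bool) : List Bool :=
  w.take k ++ (!(w.drop (k+m)).headI) :: ((w.drop k).take m ++ w.drop (k+m+1))

/-- inverse of `sig`. -/
def tau (k m : ℕ) (w : List Bool) : List Bool :=
  w.take k ++ (((w.drop (k+1)).take m) ++ (!(w.drop k).headI) :: w.drop (k+m+1))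

theorem sig_spec (k m : ℕ) (A M T : List Bool) (c : Bool)
    (hA : A.length = k) (hM : M.length = m) :
    sig k m (A ++ (M ++ c :: T)) = A ++ (!c) :: (M ++ T) := by
  have h1 : A ++ (M ++ c :: T) = (A ++ M) ++ (c :: T) := by simp
  have h2 : A ++ (M ++ c :: T) = ((A ++ M) ++ [c]) ++ T := by simp
  unfold sig
  rw [List.take_left' hA,
    show List.drop (k+m) (A ++ (M ++ c :: T)) = c :: T by
      rw [h1]; exact List.drop_left' (by simp [hA, hM]),
    show List.drop k (A ++ (M ++ c :: T)) = M ++ c :: T from List.drop_left' hA,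
    List.take_left' hM,
    show List.drop (k+m+1) (A ++ (M ++ c :: T)) = T by
      rw [h2]; exact List.drop_left' (by simp [hA, hM]; omega)]
  rfl

theorem tau_spec (k m : ℕ) (A M T : List Bool) (b : Bool)
    (hA : A.length = k) (hM : M.length = m) :
    tau k m (A ++ b :: (M ++ T)) = A ++ (M ++ (!b) :: T) := by
  have h1 : A ++ b :: (M ++ T) = (A ++ [b]) ++ (M ++ T) := by simp
  have h2 : A ++ b :: (M ++ T) = ((A ++ [b]) ++ M) ++ T := by simp
  unfold tau
  rw [List.take_left' hA,
    show List.drop (k+1) (A ++ b :: (M ++ T)) = M ++ T by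
      rw [h1]; exact List.drop_left' (by simp [hA]),
    List.take_left' hM,
    show List.drop k (A ++ b :: (M ++ T)) = b :: (M ++ T) from List.drop_left' hA,
    show List.drop (k+m+1) (A ++ b :: (M ++ T)) = T by
      rw [h2]; exact List.drop_left' (by simp [hA, hM]; omega)]
  rfl

theorem decomp (k m n : ℕ) (w : List Bool) (hw : w.length = k + m + (n+1)) :
    ∃ A M c T, A.length = k ∧ M.length = m ∧ T.length = n ∧
      w = A ++ (M ++ (c : Bool) :: T) := by
  have hu : (w.drop k).length = m + (n+1) := by simp only [List.length_drop, hw]; omega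
  have hv : ((w.drop k).drop m).length = n + 1 := by simp only [List.length_drop, hu]; omega
  obtain ⟨c, T, hcT⟩ : ∃ c T, (w.drop k).drop m = c :: T := by
    rcases h : (w.drop k).drop m with _ | ⟨c, T⟩
    · rw [h] at hv; simp at hv
    · exact ⟨c, T, rfl⟩
  refine ⟨w.take k, (w.drop k).take m, c, T, ?_, ?_, ?_, ?_⟩
  · simp only [List.length_take, hw]; omega
  · simp only [List.length_take, hu]; omega
  · have := hv; rw [hcT] at this; simpa using this
  · rw [← hcT, List.take_append_drop, List.take_append_drop]

theorem decomp2 (k m n : ℕ) (w : List Bool) (hw : w.length = k + m + (n+1)) :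
    ∃ (A : List Bool) (b : Bool) (M T : List Bool), A.length = k ∧ M.length = m ∧ T.length = n ∧
      w = A ++ b :: (M ++ T) := by
  have hv : (w.drop k).length = m + n + 1 := by simp only [List.length_drop, hw]; omega
  obtain ⟨b, u, hbu⟩ : ∃ b u, w.drop k = b :: u := by
    rcases h : w.drop k with _ | ⟨b, u⟩
    · rw [h] at hv; simp at hv
    · exact ⟨b, u, rfl⟩
  have hu : u.length = m + n := by
    have := hv; rw [hbu] at this; simpa using this
  refine ⟨w.take k, b, u.take m, u.drop m, ?_, ?_, ?_, ?_⟩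
  · simp only [List.length_take, hw]; omega
  · simp only [List.length_take, hu]; omega
  · simp only [List.length_drop, hu]; omega
  · rw [List.take_append_drop, ← hbu, List.take_append_drop]

theorem sig_tau (k m : ℕ) (hk : 1 ≤ k) (w : List Bool)
    (hw : w.length = 2*k + m) : tau k m (sig k m w) = w := by
  obtain ⟨A, M, c, T, hA, hM, hT, rfl⟩ := decomp k m (k-1) w (by omega)
  rw [sig_spec k m A M T c hA hM, tau_spec k m A M T (!c) hA hM, Bool.not_not]

theorem tau_sig (k m : ℕ) (hk : 1 ≤ k) (w : List Bool)
    (hw : w.length = 2*k + m) : sig k m (tau k m w) = w := by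
  obtain ⟨A, b, M, T, hA, hM, hT, rfl⟩ := decomp2 k m (k-1) w (by omega)
  rw [tau_spec k m A M T b hA hM, sig_spec k m A M T (!b) hA hM, Bool.not_not]

theorem sig_length (k m : ℕ) (hk : 1 ≤ k) (w : List Bool)
    (hw : w.length = 2*k + m) : (sig k m w).length = 2*k + m := by
  obtain ⟨A, M, c, T, hA, hM, hT, rfl⟩ := decomp k m (k-1) w (by omega)
  rw [sig_spec k m A M T c hA hM]; simp [hA, hM, hT]; omega

theorem tau_length (k m : ℕ) (hk : 1 ≤ k) (w : List Bool)
    (hw : w.length = 2*k + m) : (tau k m w).length = 2*k + m := by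
  obtain ⟨A, b, M, T, hA, hM, hT, rfl⟩ := decomp2 k m (k-1) w (by omega)
  rw [tau_spec k m A M T b hA hM]; simp [hA, hM, hT]; omega

theorem sig_of_occ (k m : ℕ) (hk : 1 ≤ k) (hm : m < k) (s t : List Bool)
    (hlen : s.length + t.length = m) :
    sig k m (s ++ (List.replicate k false ++ List.replicate k true) ++ t) =
      s ++ (List.replicate (k+1) false ++ List.replicate (k-1) true) ++ t := by
  set p := s.length with hp
  have hpm : p ≤ m := by omega
  have e0 : List.replicate k false = List.replicate (k-p) false ++ List.replicate p false := by
    rw [← List.replicate_add]; congr 1; omega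
  have e1 : List.replicate k true =
      List.replicate (m-p) true ++ (true :: List.replicate (k-1-(m-p)) true) := by
    rw [show (true :: List.replicate (k-1-(m-p)) true) = List.replicate ((k-1-(m-p))+1) true
        from List.replicate_succ.symm, ← List.replicate_add]
    congr 1; omega
  have hD : s ++ (List.replicate k false ++ List.replicate k true) ++ t =
      (s ++ List.replicate (k-p) false) ++
        ((List.replicate p false ++ List.replicate (m-p) true) ++
          true :: (List.replicate (k-1-(m-p)) true ++ t)) := by
    rw [e0, e1]; simp only [List.append_assoc, List.cons_append, Bool.not_true, Bool.not_false]
  rw [hD, sig_spec k m _ _ _ true (by simp; omega) (by simp; omega)]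
  have e2 : List.replicate (k+1) false =
      List.replicate (k-p) false ++ (false :: List.replicate p false) := by
    rw [show (false :: List.replicate p false) = List.replicate (p+1) false
        from List.replicate_succ.symm, ← List.replicate_add]
    congr 1; omega
  have e3 : List.replicate (k-1) true =
      List.replicate (m-p) true ++ List.replicate (k-1-(m-p)) true := by
    rw [← List.replicate_add]; congr 1; omega
  rw [e2, e3]; simp only [List.append_assoc, List.cons_append, Bool.not_true, Bool.not_false]

theorem tau_of_occ (k m : ℕ) (hk : 1 ≤ k) (hm : m < k) (s t : List Bool)
    (hlen : s.length + t.length = m) :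
    tau k m (s ++ (List.replicate (k+1) false ++ List.replicate (k-1) true) ++ t) =
      s ++ (List.replicate k false ++ List.replicate k true) ++ t := by
  set p := s.length with hp
  have hpm : p ≤ m := by omega
  have e2 : List.replicate (k+1) false =
      List.replicate (k-p) false ++ (false :: List.replicate p false) := by
    rw [show (false :: List.replicate p false) = List.replicate (p+1) false
        from List.replicate_succ.symm, ← List.replicate_add]
    congr 1; omega
  have e3 : List.replicate (k-1) true =
      List.replicate (m-p) true ++ List.replicate (k-1-(m-p)) true := by
    rw [← List.replicate_add]; congr 1; omega
  have hD : s ++ (List.replicate (k+1) false ++ List.replicate (k-1) true) ++ t =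
      (s ++ List.replicate (k-p) false) ++ false ::
        ((List.replicate p false ++ List.replicate (m-p) true) ++
          (List.replicate (k-1-(m-p)) true ++ t)) := by
    rw [e2, e3]; simp only [List.append_assoc, List.cons_append, Bool.not_true, Bool.not_false]
  rw [hD, tau_spec k m _ _ _ false (by simp; omega) (by simp; omega)]
  have e0 : List.replicate k false = List.replicate (k-p) false ++ List.replicate p false := by
    rw [← List.replicate_add]; congr 1; omega
  have e1 : List.replicate k true =
      List.replicate (m-p) true ++ (true :: List.replicate (k-1-(m-p)) true) := by
    rw [show (true :: List.replicate (k-1-(m-p)) true) = List.replicate ((k-1-(m-p))+1) true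
        from List.replicate_succ.symm, ← List.replicate_add]
    congr 1; omega
  rw [e0, e1]; simp only [List.append_assoc, List.cons_append, Bool.not_true, Bool.not_false]

theorem infix_iff (k m : ℕ) (hk : 1 ≤ k) (hm : m < k) (w : List Bool)
    (hw : w.length = 2*k + m) :
    (List.replicate k false ++ List.replicate k true) <:+: w ↔
      (List.replicate (k+1) false ++ List.replicate (k-1) true) <:+: sig k m w := by
  constructor
  · rintro ⟨s, t, rfl⟩
    have hlen : s.length + t.length = m := by
      simp at hw; omega
    exact ⟨s, t, (sig_of_occ k m hk hm s t hlen).symm⟩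
  · rintro ⟨s, t, h⟩
    have hlen : s.length + t.length = m := by
      have := sig_length k m hk w hw
      rw [← h] at this; simp at this; omega
    refine ⟨s, t, ?_⟩
    have := congrArg (tau k m) h
    rw [sig_tau k m hk w hw, tau_of_occ k m hk hm s t hlen] at this
    exact this

theorem count_sig (k m : ℕ) (hk : 1 ≤ k) (v w : List Bool)
    (hv : v.length = 2*k + m) (hw : w.length = 2*k + m) :
    (List.zipWith (fun a b => a != b) (sig k m v) (sig k m w)).count true =
      (List.zipWith (fun a b => a != b) v w).count true := by
  obtain ⟨A1, M1, c1, T1, hA1, hM1, hT1, rfl⟩ := decomp k m (k-1) v (by omega)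
  obtain ⟨A2, M2, c2, T2, hA2, hM2, hT2, rfl⟩ := decomp k m (k-1) w (by omega)
  rw [sig_spec k m A1 M1 T1 c1 hA1 hM1, sig_spec k m A2 M2 T2 c2 hA2 hM2]
  have L : List.zipWith (fun a b => a != b) (A1 ++ (!c1) :: (M1 ++ T1))
      (A2 ++ (!c2) :: (M2 ++ T2)) =
      List.zipWith (fun a b => a != b) A1 A2 ++ ((!c1) != (!c2)) ::
        (List.zipWith (fun a b => a != b) M1 M2 ++ List.zipWith (fun a b => a != b) T1 T2) := by
    rw [List.zipWith_append (hA1.trans hA2.symm)]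
    simp only [List.zipWith_cons_cons]
    rw [List.zipWith_append (hM1.trans hM2.symm)]
  have R : List.zipWith (fun a b => a != b) (A1 ++ (M1 ++ c1 :: T1))
      (A2 ++ (M2 ++ c2 :: T2)) =
      List.zipWith (fun a b => a != b) A1 A2 ++
        (List.zipWith (fun a b => a != b) M1 M2 ++ (c1 != c2) ::
          List.zipWith (fun a b => a != b) T1 T2) := by
    rw [List.zipWith_append (hA1.trans hA2.symm),
        List.zipWith_append (hM1.trans hM2.symm)]
    simp only [List.zipWith_cons_cons]
  rw [L, R]
  simp only [List.count_append, List.count_cons]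
  have hcc : ((!c1) != (!c2)) = (c1 != c2) := by cases c1 <;> cases c2 <;> rfl
  rw [hcc]
  omega

theorem cubeRel_sig (k m : ℕ) (hk : 1 ≤ k) (v w : List Bool)
    (hv : v.length = 2*k + m) (hw : w.length = 2*k + m) :
    cubeRel (sig k m v) (sig k m w) ↔ cubeRel v w := by
  unfold cubeRel; rw [count_sig k m hk v w hv hw]

theorem sig_injOn (k m : ℕ) (hk : 1 ≤ k) (v w : List Bool)
    (hv : v.length = 2*k + m) (hw : w.length = 2*k + m)
    (h : sig k m v = sig k m w) : v = w := by
  have := congrArg (tau k m) h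
  rwa [sig_tau k m hk v hv, sig_tau k m hk w hw] at this

end Stmt1Aux

open Stmt1Aux in
theorem stmt1 (k d : ℕ) (hk : 2 ≤ k) (hd1 : 1 ≤ d) (hd2 : d ≤ 3 * k - 1) :
    Nonempty (genFib d (List.replicate k false ++ List.replicate k true) ≃g
      genFib d (List.replicate (k + 1) false ++ List.replicate (k - 1) true)) := by
  set F := List.replicate k false ++ List.replicate k true with hF
  set G := List.replicate (k+1) false ++ List.replicate (k-1) true with hG
  have hFlen : F.length = 2*k := by simp [hF]; omega
  have hGlen : G.length = 2*k := by simp [hG]; omega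
  by_cases hd : d < 2*k
  · -- no occurrences possible: both graphs are the full cube
    have hFfree : ∀ w : List Bool, w.length = d → ¬ F <:+: w := by
      intro w hwl h
      have := h.length_le
      omega
    have hGfree : ∀ w : List Bool, w.length = d → ¬ G <:+: w := by
      intro w hwl h
      have := h.length_le
      omega
    refine ⟨⟨Equiv.mk
      (fun v => ⟨v.1, v.2.1, hGfree v.1 v.2.1⟩)
      (fun v => ⟨v.1, v.2.1, hFfree v.1 v.2.1⟩)
      (fun v => rfl) (fun v => rfl), ?_⟩⟩
    intro v w
    simp only [genFib, SimpleGraph.fromRel_adj]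
    constructor
    · rintro ⟨hne, h⟩
      exact ⟨fun he => hne (by simp [Subtype.ext_iff] at he ⊢; exact he), h⟩
    · rintro ⟨hne, h⟩
      exact ⟨fun he => hne (by simp [Subtype.ext_iff] at he ⊢; exact he), h⟩
  · set m := d - 2*k with hm
    have hdm : d = 2*k + m := by omega
    have hmk : m < k := by omega
    have hk1 : 1 ≤ k := by omega
    refine ⟨⟨Equiv.mk
      (fun v => ⟨sig k m v.1, by
        have hv1 : v.1.length = 2*k + m := by have := v.2.1; omega
        refine ⟨?_, fun h => v.2.2 ((infix_iff k m hk1 hmk v.1 hv1).2 h)⟩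
        have := sig_length k m hk1 v.1 hv1; omega⟩)
      (fun v => ⟨tau k m v.1, by
        have hv1 : v.1.length = 2*k + m := by have := v.2.1; omega
        refine ⟨?_, fun h => ?_⟩
        · have := tau_length k m hk1 v.1 hv1; omega
        · have h2 := (infix_iff k m hk1 hmk (tau k m v.1)
            (tau_length k m hk1 v.1 hv1)).1 h
          rw [tau_sig k m hk1 v.1 hv1] at h2
          exact v.2.2 h2⟩)
      (fun v => Subtype.ext (by
        have hv1 : v.1.length = 2*k + m := by have := v.2.1; omega
        exact sig_tau k m hk1 v.1 hv1))
      (fun v => Subtype.ext (by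
        have hv1 : v.1.length = 2*k + m := by have := v.2.1; omega
        exact tau_sig k m hk1 v.1 hv1)), ?_⟩⟩
    intro v w
    have hvl : v.1.length = 2*k + m := by have := v.2.1; omega
    have hwl : w.1.length = 2*k + m := by have := w.2.1; omega
    simp only [genFib, SimpleGraph.fromRel_adj, Equiv.coe_fn_mk]
    constructor
    · rintro ⟨hne, h⟩
      refine ⟨fun he => hne (by rw [he]), ?_⟩
      rcases h with h | h
      · exact Or.inl ((cubeRel_sig k m hk1 v.1 w.1 hvl hwl).1 h)
      · exact Or.inr ((cubeRel_sig k m hk1 w.1 v.1 hwl hvl).1 h)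
    · rintro ⟨hne, h⟩
      refine ⟨fun he => hne (Subtype.ext (sig_injOn k m hk1 v.1 w.1 hvl hwl
        (congrArg Subtype.val he))), ?_⟩
      rcases h with h | h
      · exact Or.inl ((cubeRel_sig k m hk1 v.1 w.1 hvl hwl).2 h)
      · exact Or.inr ((cubeRel_sig k m hk1 w.1 v.1 hwl hvl).2 h)
end

section
/- Let d ≥ 2 and let f and f' be binary strings of length d−1 with ν(f) = ν(f'). Then the generalized Fibonacci cubes Q_d(f) and Q_d(f') are isomorphic. -/
namespace GF

/-- master counting lemma -/
lemma count_eq_card (l : List Bool) {d : ℕ} (hl : l.length = d) :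
    l.count true = (Finset.univ.filter (fun i : Fin d => l.getD i.val false = true)).card := by
  subst hl
  conv_lhs => rw [← List.map_get_finRange l]
  rw [List.count_eq_countP, List.countP_map, Fin.univ_def]
  simp only [Finset.filter, Finset.card, Multiset.filter_coe, Multiset.coe_card,
    List.countP_eq_length_filter]
  congr 1
  apply List.filter_congr
  intro i _
  simp [List.getD_eq_getElem l false i.isLt]

def fo {d : ℕ} (l : List Bool) : Fin d → Bool := fun i => l.getD i.val false

lemma fo_inj {d : ℕ} {l l' : List Bool} (h : l.length = d) (h' : l'.length = d)
    (he : (fo l : Fin d → Bool) = fo l') : l = l' := by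
  apply List.ext_getElem (by omega)
  intro n h1 h2
  have := congrFun he ⟨n, by omega⟩
  simp only [fo] at this
  rwa [List.getD_eq_getElem _ _ h1, List.getD_eq_getElem _ _ h2] at this

lemma fo_inj_iff {d : ℕ} {l l' : List Bool} (h : l.length = d) (h' : l'.length = d) :
    (fo l : Fin d → Bool) = fo l' ↔ l = l' :=
  ⟨fun he => fo_inj h h' he, fun he => by rw [he]⟩

lemma ofFn_fo {d : ℕ} {l : List Bool} (h : l.length = d) :
    List.ofFn (fo l : Fin d → Bool) = l := by
  apply List.ext_getElem (by simp [h])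
  intro n h1 h2
  rw [List.getElem_ofFn]
  exact List.getD_eq_getElem _ _ h2

lemma fo_ofFn {d : ℕ} (g : Fin d → Bool) : fo (List.ofFn g) = g := by
  funext i
  show (List.ofFn g).getD i.val false = g i
  rw [List.getD_eq_getElem _ _ (by simp [i.isLt] : i.val < (List.ofFn g).length),
    List.getElem_ofFn]

def hd2 {d : ℕ} (g h : Fin d → Bool) : ℕ := (Finset.univ.filter fun i => g i ≠ h i).card

lemma cubeRel_iff {d : ℕ} {v w : List Bool} (hv : v.length = d) (hw : w.length = d) :
    cubeRel v w ↔ hd2 (fo v : Fin d → Bool) (fo w) = 1 := by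
  have hz : (List.zipWith (fun a b => a != b) v w).length = d := by simp [hv, hw]
  unfold cubeRel hd2
  rw [count_eq_card _ hz]
  have : ∀ i : Fin d, ((List.zipWith (fun a b => a != b) v w).getD i.val false = true)
      ↔ ((fo v : Fin d → Bool) i ≠ fo w i) := by
    intro i
    have hi : i.val < (List.zipWith (fun a b => a != b) v w).length := by omega
    rw [List.getD_eq_getElem _ _ hi, List.getElem_zipWith]
    show _ ↔ v.getD i.val false ≠ w.getD i.val false
    rw [List.getD_eq_getElem _ _ (by omega : i.val < v.length),
      List.getD_eq_getElem _ _ (by omega : i.val < w.length)]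
    simp
  rw [Finset.filter_congr (fun i _ => by rw [this i])]



lemma infix_iff {f w : List Bool} (h : w.length = f.length + 1) :
    f <:+: w ↔ (∃ x, w = f ++ [x]) ∨ (∃ x, w = x :: f) := by
  constructor
  · rintro ⟨s, t, rfl⟩
    simp only [List.length_append] at h
    rcases s with _ | ⟨a, s⟩
    · left
      have ht : t.length = 1 := by simp at h; omega
      obtain ⟨x, rfl⟩ := List.length_eq_one_iff.mp ht
      exact ⟨x, by simp⟩
    · right
      simp only [List.length_cons] at h
      have hs : s = [] := List.length_eq_zero_iff.mp (by omega)
      have ht : t = [] := List.length_eq_zero_iff.mp (by omega)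
      subst hs; subst ht
      exact ⟨a, by simp⟩
  · rintro (⟨x, rfl⟩ | ⟨x, rfl⟩)
    · exact ⟨[], [x], by simp⟩
    · exact ⟨[x], [], by simp⟩

lemma aux_zip : ∀ (l : List Bool) (a : Bool),
    List.zipWith (fun a b => a != b) (a :: l) (l ++ [l.getLastD a]) =
      List.zipWith (fun a b => a != b) (a :: l) l ++ [false] := by
  intro l
  induction l with
  | nil => intro a; simp
  | cons b l ih => intro a; simp only [List.getLastD_cons, List.cons_append,
      List.zipWith_cons_cons, ih b, List.cons_append]

lemma exists_perm {α : Type*} [DecidableEq α] [Fintype α] :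
    ∀ (n : ℕ) (s t : Finset α), (s \ t).card = n → s.card = t.card →
    ∃ π : Equiv.Perm α, (∀ x ∈ s, π x ∈ t) ∧ ∀ x, x ∉ s → x ∉ t → π x = x := by
  intro n
  induction n with
  | zero =>
    intro s t h hc
    have hsub : s ⊆ t := by
      rwa [Finset.card_eq_zero, Finset.sdiff_eq_empty_iff_subset] at h
    have : s = t := Finset.eq_of_subset_of_card_le hsub hc.ge
    subst this
    exact ⟨1, by simp, by simp⟩
  | succ n ih =>
    intro s t h hc
    obtain ⟨a, ha⟩ : (s \ t).Nonempty := by rw [← Finset.card_pos, h]; omega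
    obtain ⟨b, hb⟩ : (t \ s).Nonempty := by
      by_contra hts
      rw [Finset.not_nonempty_iff_eq_empty, Finset.sdiff_eq_empty_iff_subset] at hts
      have : t = s := Finset.eq_of_subset_of_card_le hts hc.le
      subst this
      simp at h
    rw [Finset.mem_sdiff] at ha hb
    have hab : a ≠ b := fun e => ha.2 (e ▸ hb.1)
    set s₂ := insert b (s.erase a) with hs₂
    have h1 : s₂ \ t = (s \ t).erase a := by
      ext x
      simp only [hs₂, Finset.mem_sdiff, Finset.mem_erase, Finset.mem_insert]
      constructor
      · rintro ⟨hx1 | ⟨hx2, hx3⟩, hx4⟩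
        · exact absurd hb.1 (hx1 ▸ hx4)
        · exact ⟨hx2, hx3, hx4⟩
      · rintro ⟨hx1, hx2, hx3⟩
        exact ⟨Or.inr ⟨hx1, hx2⟩, hx3⟩
    have hbs : b ∉ s.erase a := fun hx => hb.2 (Finset.mem_of_mem_erase hx)
    have h2 : s₂.card = t.card := by
      rw [hs₂, Finset.card_insert_of_notMem hbs, Finset.card_erase_of_mem ha.1]
      have : 1 ≤ s.card := Finset.card_pos.mpr ⟨a, ha.1⟩
      omega
    have h3 : (s₂ \ t).card = n := by
      rw [h1, Finset.card_erase_of_mem (Finset.mem_sdiff.mpr ha), h]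
      omega
    obtain ⟨π', h4, h5⟩ := ih s₂ t h3 h2
    refine ⟨(Equiv.swap a b).trans π', ?_, ?_⟩
    · intro x hx
      by_cases hxa : x = a
      · subst hxa
        simp only [Equiv.trans_apply, Equiv.swap_apply_left]
        exact h4 b (by simp [hs₂])
      · have hxb : x ≠ b := fun e => hb.2 (e ▸ hx)
        simp only [Equiv.trans_apply, Equiv.swap_apply_of_ne_of_ne hxa hxb]
        exact h4 x (by simp [hs₂, Finset.mem_erase, hxa, hx])
    · intro x hxs hxt
      have hxa : x ≠ a := fun e => hxs (e ▸ ha.1)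
      have hxb : x ≠ b := fun e => hxt (e ▸ hb.1)
      simp only [Equiv.trans_apply, Equiv.swap_apply_of_ne_of_ne hxa hxb]
      refine h5 x ?_ hxt
      simp only [hs₂, Finset.mem_insert, Finset.mem_erase]
      rintro (rfl | ⟨-, hx⟩)
      · exact hxb rfl
      · exact hxs hx

lemma exists_perm' {α : Type*} [DecidableEq α] [Fintype α] (s t : Finset α)
    (hc : s.card = t.card) :
    ∃ π : Equiv.Perm α, (∀ x, x ∈ s ↔ π x ∈ t) ∧ ∀ x, x ∉ s → x ∉ t → π x = x := by
  obtain ⟨π, h1, h2⟩ := exists_perm _ s t rfl hc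
  have himg : s.image π = t := by
    apply Finset.eq_of_subset_of_card_le
    · intro y hy
      obtain ⟨x, hx, rfl⟩ := Finset.mem_image.mp hy
      exact h1 x hx
    · rw [Finset.card_image_of_injective _ π.injective, hc]
  refine ⟨π, fun x => ⟨fun hx => h1 x hx, fun hx => ?_⟩, h2⟩
  rw [← himg] at hx
  obtain ⟨y, hy, he⟩ := Finset.mem_image.mp hx
  rwa [← π.injective he]

def ind {d : ℕ} (s : Finset (Fin d)) : Fin d → Bool := fun i => decide (i ∈ s)

def X {d : ℕ} (t g : Fin d → Bool) : Fin d → Bool := fun i => g i != t i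

lemma X_X {d : ℕ} (t g : Fin d → Bool) : X t (X t g) = g := by
  funext i
  show ((g i != t i) != t i) = g i
  cases g i <;> cases t i <;> rfl

lemma X_eq_iff {d : ℕ} {t g h : Fin d → Bool} : X t g = h ↔ g = X t h := by
  constructor
  · rintro rfl; rw [X_X]
  · rintro rfl; rw [X_X]

lemma main {d : ℕ} (hd : 2 ≤ d) (f : List Bool) (hf : f.length = d - 1) :
    ∃ (t : Fin d → Bool) (S : Finset (Fin d)),
      S.card = nu f ∧ (⟨0, by omega⟩ : Fin d) ∉ S ∧ (⟨d - 1, by omega⟩ : Fin d) ∉ S ∧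
      ∀ w : List Bool, w.length = d →
        (f <:+: w ↔ (X t (fo w) = ind (∅ : Finset (Fin d)) ∨
          X t (fo w) = ind {(⟨d - 1, by omega⟩ : Fin d)} ∨
          X t (fo w) = ind S ∨ X t (fo w) = ind (insert (⟨0, by omega⟩ : Fin d) S))) := by
  set z : Fin d := ⟨0, by omega⟩ with hzdef
  set m : Fin d := ⟨d - 1, by omega⟩ with hmdef
  rcases f with _ | ⟨a, f₀⟩
  · simp at hf; omega
  have hlen : f₀.length + 2 = d := by simp at hf; omega
  set bigb := f₀.getLastD a with hbigb
  set t : Fin d → Bool := fo ((a :: f₀) ++ [bigb]) with ht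
  set L : List Bool :=
    false :: (List.zipWith (fun a b => a != b) (a :: f₀) f₀ ++ [false]) with hLdef
  have hL : L = List.zipWith (fun a b => a != b) (a :: a :: f₀) ((a :: f₀) ++ [bigb]) := by
    rw [hLdef, hbigb]
    simp only [List.cons_append, List.zipWith_cons_cons, aux_zip f₀ a, bne_self_eq_false]
  have hLlen : L.length = d := by
    rw [hLdef]
    simp
    omega
  set v : Fin d → Bool := fo L with hvdef
  have hv : v = X t (fo (a :: a :: f₀)) := by
    funext i
    show L.getD i.val false = ((a :: a :: f₀).getD i.val false != t i)
    have hi : i.val < L.length := by omega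
    rw [hL] at hi ⊢
    rw [List.getD_eq_getElem _ _ hi, List.getElem_zipWith]
    have h1 : i.val < (a :: a :: f₀).length := by simp; omega
    have h2 : i.val < ((a :: f₀) ++ [bigb]).length := by simp; omega
    rw [ht]
    show _ = ((a :: a :: f₀).getD i.val false != ((a :: f₀) ++ [bigb]).getD i.val false)
    rw [List.getD_eq_getElem _ _ h1, List.getD_eq_getElem _ _ h2]
  set S : Finset (Fin d) := Finset.univ.filter (fun i => v i = true) with hSdef
  have hmemS : ∀ i, i ∈ S ↔ v i = true := by
    intro i; simp [hSdef]
  have hSv : ind S = v := by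
    funext i
    apply Bool.eq_iff_iff.mpr
    simp [ind, hmemS i]
  have hcard : S.card = nu (a :: f₀) := by
    have h1 : L.count true =
        (Finset.univ.filter (fun i : Fin d => L.getD i.val false = true)).card :=
      count_eq_card L hLlen
    have h2 : S = Finset.univ.filter (fun i : Fin d => L.getD i.val false = true) := rfl
    rw [h2, ← h1, hLdef]
    simp [nu, List.count_cons, List.count_append]
  have hvz : v z = false := by
    show L.getD 0 false = false
    rw [hLdef]; rfl
  have hvm : v m = false := by
    show L.getD (d - 1) false = false
    have : L = (false :: List.zipWith (fun a b => a != b) (a :: f₀) f₀) ++ [false] := by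
      rw [hLdef]; simp
    rw [this, List.getD_append_right]
    · have hlz : (false :: List.zipWith (fun a b => a != b) (a :: f₀) f₀).length = d - 1 := by
        simp only [List.length_cons, List.length_zipWith]; omega
      rw [hlz]
      simp
    · simp only [List.length_cons, List.length_zipWith]; omega
  have hzS : z ∉ S := by rw [hmemS]; simp [hvz]
  have hmS : m ∉ S := by rw [hmemS]; simp [hvm]
  refine ⟨t, S, hcard, hzS, hmS, ?_⟩
  intro w hw
  -- the four characterizations
  have key : ∀ u : List Bool, u.length = d → (X t (fo w) = X t (fo u) ↔ w = u) := by
    intro u hu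
    rw [X_eq_iff, X_X]
    exact fo_inj_iff hw hu
  have c1 : X t (fo ((a :: f₀) ++ [bigb])) = ind (∅ : Finset (Fin d)) := by
    funext i
    show (t i != t i) = _
    simp [ind]
  have c2 : X t (fo ((a :: f₀) ++ [!bigb])) = ind ({m} : Finset (Fin d)) := by
    funext i
    show (((a :: f₀) ++ [!bigb]).getD i.val false != ((a :: f₀) ++ [bigb]).getD i.val false)
        = ind {m} i
    by_cases h : i.val < (a :: f₀).length
    · rw [List.getD_append _ _ _ _ h, List.getD_append _ _ _ _ h]
      have him : i ≠ m := by
        intro e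
        rw [e] at h
        simp [hmdef] at h
        omega
      simp [ind, him]
    · have h1 : (a :: f₀).length ≤ i.val := by omega
      have h2 : i.val - (a :: f₀).length = 0 := by
        have := i.isLt
        simp at h1 ⊢
        omega
      rw [List.getD_append_right _ _ _ _ h1, List.getD_append_right _ _ _ _ h1, h2]
      have him : i = m := by
        apply Fin.ext
        have := i.isLt
        simp [hmdef]
        simp at h1
        omega
      simp [ind, him, List.getD_cons_zero]
  have c3 : X t (fo (a :: a :: f₀)) = ind S := by rw [hSv, hv]
  have c4 : X t (fo ((!a) :: a :: f₀)) = ind (insert z S) := by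
    funext i
    by_cases hi0 : i = z
    · subst hi0
      show (((!a) :: a :: f₀).getD 0 false != ((a :: f₀) ++ [bigb]).getD 0 false) = _
      have e1 : ((a :: f₀) ++ [bigb]).getD 0 false = a := rfl
      have e2 : ((!a) :: a :: f₀).getD 0 false = !a := rfl
      rw [e1, e2]
      have : ind (insert z S) z = true := by simp [ind]
      rw [this]
      cases a <;> rfl
    · obtain ⟨j, hj⟩ : ∃ j, i.val = j + 1 := by
        have : i.val ≠ 0 := fun e => hi0 (Fin.ext e)
        exact ⟨i.val - 1, by omega⟩
      show (((!a) :: a :: f₀).getD i.val false != t i) = ind (insert z S) i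
      have l1 : ((!a) :: a :: f₀).getD i.val false = (a :: f₀).getD j false := by
        rw [hj, List.getD_cons_succ]
      have l2 : v i = ((a :: f₀).getD j false != t i) := by
        rw [hv]
        show ((a :: a :: f₀).getD i.val false != t i) = _
        rw [hj, List.getD_cons_succ]
      rw [l1, ← l2]
      have e3 : ind (insert z S) i = ind S i := by
        simp [ind, Finset.mem_insert, hi0]
      rw [e3, hSv]
  have dich : ∀ x y : Bool, x = y ∨ x = !y := by decide
  rw [infix_iff (by simp at hw ⊢; omega : w.length = (a :: f₀).length + 1)]
  constructor
  · rintro (⟨x, rfl⟩ | ⟨x, rfl⟩)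
    · rcases dich x bigb with rfl | rfl
      · exact Or.inl c1
      · exact Or.inr (Or.inl c2)
    · rcases dich x a with rfl | rfl
      · exact Or.inr (Or.inr (Or.inl c3))
      · exact Or.inr (Or.inr (Or.inr c4))
  · rintro (h | h | h | h)
    · rw [← c1, key _ (by simp; omega)] at h
      exact Or.inl ⟨bigb, h⟩
    · rw [← c2, key _ (by simp; omega)] at h
      exact Or.inl ⟨!bigb, h⟩
    · rw [← c3, key _ (by simp; omega)] at h
      exact Or.inr ⟨a, h⟩
    · rw [← c4, key _ (by simp; omega)] at h
      exact Or.inr ⟨!a, h⟩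

def XE {d : ℕ} (t : Fin d → Bool) : (Fin d → Bool) ≃ (Fin d → Bool) :=
  ⟨X t, X t, X_X t, X_X t⟩

def PE {d : ℕ} (π : Equiv.Perm (Fin d)) : (Fin d → Bool) ≃ (Fin d → Bool) :=
  ⟨fun g => g ∘ π.symm, fun g => g ∘ π, fun g => by funext i; simp,
    fun g => by funext i; simp⟩

lemma PE_ind {d : ℕ} (π : Equiv.Perm (Fin d)) (s : Finset (Fin d)) :
    PE π (ind s) = ind (s.image π) := by
  funext i
  apply Bool.eq_iff_iff.mpr
  show decide (π.symm i ∈ s) = true ↔ decide (i ∈ s.image π) = true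
  simp only [decide_eq_true_eq, Finset.mem_image]
  constructor
  · intro h; exact ⟨π.symm i, h, by simp⟩
  · rintro ⟨x, hx, rfl⟩; simpa using hx

lemma hd2_X {d : ℕ} (t g h : Fin d → Bool) : hd2 (X t g) (X t h) = hd2 g h := by
  unfold hd2
  congr 1
  apply Finset.filter_congr
  intro i _
  show (X t g i ≠ X t h i) ↔ (g i ≠ h i)
  cases hg : g i <;> cases hh : h i <;> cases ht : t i <;> simp [X, hg, hh, ht]

lemma hd2_PE {d : ℕ} (π : Equiv.Perm (Fin d)) (g h : Fin d → Bool) :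
    hd2 (PE π g) (PE π h) = hd2 g h := by
  unfold hd2
  apply Finset.card_bij' (fun i _ => π.symm i) (fun i _ => π i)
  · intro i hi
    simp only [Finset.mem_filter, Finset.mem_univ, true_and] at hi ⊢
    exact hi
  · intro i hi
    simp only [Finset.mem_filter, Finset.mem_univ, true_and] at hi ⊢
    show (PE π g) (π i) ≠ (PE π h) (π i)
    simpa [PE] using hi
  · intro i _; simp
  · intro i _; simp

lemma PE_PE {d : ℕ} (π : Equiv.Perm (Fin d)) (g : Fin d → Bool) :
    PE π.symm (PE π g) = g := by
  funext i
  simp [PE]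

lemma PE_PE' {d : ℕ} (π : Equiv.Perm (Fin d)) (g : Fin d → Bool) :
    PE π (PE π.symm g) = g := by
  funext i
  simp [PE]

def phi {d : ℕ} (t t' : Fin d → Bool) (π : Equiv.Perm (Fin d)) :
    (Fin d → Bool) ≃ (Fin d → Bool) where
  toFun g := X t' (PE π (X t g))
  invFun g := X t (PE π.symm (X t' g))
  left_inv g := by
    show X t (PE π.symm (X t' (X t' (PE π (X t g))))) = g
    rw [X_X, PE_PE, X_X]
  right_inv g := by
    show X t' (PE π (X t (X t (PE π.symm (X t' g))))) = g
    rw [X_X, PE_PE', X_X]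

lemma X_phi {d : ℕ} (t t' : Fin d → Bool) (π : Equiv.Perm (Fin d)) (g : Fin d → Bool) :
    X t' (phi t t' π g) = PE π (X t g) := by
  show X t' (X t' (PE π (X t g))) = _
  rw [X_X]

lemma hd2_phi {d : ℕ} (t t' : Fin d → Bool) (π : Equiv.Perm (Fin d)) (g h : Fin d → Bool) :
    hd2 (phi t t' π g) (phi t t' π h) = hd2 g h := by
  show hd2 (X t' (PE π (X t g))) (X t' (PE π (X t h))) = _
  rw [hd2_X, hd2_PE, hd2_X]

lemma build {d : ℕ} {f f' : List Bool} (Φ : (Fin d → Bool) ≃ (Fin d → Bool))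
    (hd2Φ : ∀ g h, hd2 (Φ g) (Φ h) = hd2 g h)
    (master : ∀ w : List Bool, w.length = d →
      (f <:+: w ↔ f' <:+: List.ofFn (Φ (fo w)))) :
    Nonempty (genFib d f ≃g genFib d f') := by
  let E : {w : List Bool // w.length = d ∧ ¬ f <:+: w} ≃
      {w : List Bool // w.length = d ∧ ¬ f' <:+: w} :=
  { toFun := fun w => ⟨List.ofFn (Φ (fo w.1)), by simp,
      fun h => w.2.2 ((master w.1 w.2.1).mpr h)⟩
    invFun := fun w => ⟨List.ofFn (Φ.symm (fo w.1)), by simp, by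
      intro h
      have h2 := (master _ (by simp)).mp h
      rw [fo_ofFn, Equiv.apply_symm_apply, ofFn_fo w.2.1] at h2
      exact w.2.2 h2⟩
    left_inv := fun w => Subtype.ext (by
      show List.ofFn (Φ.symm (fo (List.ofFn (Φ (fo w.1))))) = w.1
      rw [fo_ofFn, Equiv.symm_apply_apply, ofFn_fo w.2.1])
    right_inv := fun w => Subtype.ext (by
      show List.ofFn (Φ (fo (List.ofFn (Φ.symm (fo w.1))))) = w.1
      rw [fo_ofFn, Equiv.apply_symm_apply, ofFn_fo w.2.1]) }
  have hE1 : ∀ w : {w : List Bool // w.length = d ∧ ¬ f <:+: w},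
      (E w).1 = List.ofFn (Φ (fo w.1)) := fun w => rfl
  have hcc : ∀ u v : {w : List Bool // w.length = d ∧ ¬ f <:+: w},
      (cubeRel (E u).1 (E v).1 ↔ cubeRel u.1 v.1) := by
    intro u v
    rw [hE1, hE1, cubeRel_iff List.length_ofFn List.length_ofFn, cubeRel_iff u.2.1 v.2.1,
      fo_ofFn, fo_ofFn, hd2Φ]
  refine ⟨⟨E, ?_⟩⟩
  intro a b
  show (genFib d f').Adj (E a) (E b) ↔ (genFib d f).Adj a b
  rw [genFib, genFib, SimpleGraph.fromRel_adj, SimpleGraph.fromRel_adj]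
  constructor
  · rintro ⟨hne, hcr⟩
    refine ⟨fun he => hne (by rw [he]), ?_⟩
    rcases hcr with h | h
    · exact Or.inl ((hcc a b).mp h)
    · exact Or.inr ((hcc b a).mp h)
  · rintro ⟨hne, hcr⟩
    refine ⟨fun he => hne (E.injective he), ?_⟩
    rcases hcr with h | h
    · exact Or.inl ((hcc a b).mpr h)
    · exact Or.inr ((hcc b a).mpr h)

end GF


theorem stmt3 (d : ℕ) (hd : 2 ≤ d) (f f' : List Bool)
    (hf : f.length = d - 1) (hf' : f'.length = d - 1) (hnu : nu f = nu f') :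
    Nonempty (genFib d f ≃g genFib d f') := by
  classical
  obtain ⟨t, S, hcard, hz, hm, hiff⟩ := GF.main hd f hf
  obtain ⟨t', S', hcard', hz', hm', hiff'⟩ := GF.main hd f' hf'
  obtain ⟨π, hπ, hfix⟩ := GF.exists_perm' S S' (by rw [hcard, hcard', hnu])
  have hπz : π ⟨0, by omega⟩ = ⟨0, by omega⟩ := hfix _ hz hz'
  have hπm : π ⟨d - 1, by omega⟩ = ⟨d - 1, by omega⟩ := hfix _ hm hm'
  have himg : S.image π = S' := by
    ext y
    simp only [Finset.mem_image]
    constructor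
    · rintro ⟨x, hx, rfl⟩; exact (hπ x).mp hx
    · intro hy
      exact ⟨π.symm y, (hπ (π.symm y)).mpr (by simpa using hy), by simp⟩
  refine GF.build (GF.phi t t' π) (GF.hd2_phi t t' π) ?_
  intro w hw
  rw [hiff w hw, hiff' _ (by simp), GF.fo_ofFn]
  have step : ∀ (s s₂ : Finset (Fin d)), s.image π = s₂ →
      (GF.X t' (GF.phi t t' π (GF.fo w)) = GF.ind s₂ ↔ GF.X t (GF.fo w) = GF.ind s) := by
    rintro s s₂ rfl
    rw [GF.X_phi, ← GF.PE_ind]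
    constructor
    · intro h
      have := congrArg (GF.PE π.symm) h
      rwa [GF.PE_PE, GF.PE_PE] at this
    · intro h; rw [h]
  refine or_congr (step ∅ ∅ (by simp)).symm (or_congr ?_ (or_congr ?_ ?_))
  · exact (step {⟨d - 1, by omega⟩} {⟨d - 1, _⟩}
      (by rw [Finset.image_singleton, hπm])).symm
  · exact (step S S' himg).symm
  · exact (step (insert ⟨0, by omega⟩ S) (insert ⟨0, _⟩ S')
      (by rw [Finset.image_insert, hπz, himg])).symm
end

section
/- For every integer k ≥ 2, the number of binary strings of length 3k−1 that contain 0^k 1^k as a consecutive substring equals k·2^{k−1}. -/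
lemma occ_not_lt (k : ℕ) (u₁ v₁ u₂ v₂ : List Bool)
    (h : u₁ ++ ((List.replicate k false ++ List.replicate k true) ++ v₁) =
         u₂ ++ ((List.replicate k false ++ List.replicate k true) ++ v₂))
    (hlen : u₂.length + 2 * k + v₂.length = 3 * k - 1)
    (hlt : u₁.length < u₂.length) : False := by
  have hk0 : 1 ≤ k := by omega
  have hj : u₂.length ≤ k - 1 := by omega
  set m := u₁.length + k with hm
  have e1 : (u₁ ++ ((List.replicate k false ++ List.replicate k true) ++ v₁))[m]? = some true := by
    rw [List.getElem?_append_right (by omega)]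
    rw [List.append_assoc]
    rw [List.getElem?_append_right (by simp; omega)]
    rw [List.getElem?_append_left (by simp; omega)]
    rw [List.getElem?_replicate]
    simp
    omega
  have e2 : (u₂ ++ ((List.replicate k false ++ List.replicate k true) ++ v₂))[m]? = some false := by
    rw [List.getElem?_append_right (by omega)]
    rw [List.append_assoc]
    rw [List.getElem?_append_left (by simp; omega)]
    rw [List.getElem?_replicate]
    simp
    omega
  rw [h, e2] at e1
  simp at e1

theorem stmt7 (k : ℕ) (hk : 2 ≤ k) :
    {w : List Bool | w.length = 3 * k - 1 ∧
      (List.replicate k false ++ List.replicate k true) <:+: w}.ncard = k * 2 ^ (k - 1) := by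
  classical
  set f : List Bool := List.replicate k false ++ List.replicate k true with hf
  have hfl : f.length = 2 * k := by simp [hf]; omega
  set F : Fin k × List.Vector Bool (k - 1) → List Bool :=
    fun p => p.2.toList.take p.1 ++ (f ++ p.2.toList.drop p.1) with hF
  have hinj : Set.InjOn F (Finset.univ : Finset (Fin k × List.Vector Bool (k-1))) := by
    rintro ⟨i₁, t₁⟩ - ⟨i₂, t₂⟩ - hEq
    simp only [hF] at hEq
    have ht₁ : t₁.toList.length = k - 1 := t₁.toList_length
    have ht₂ : t₂.toList.length = k - 1 := t₂.toList_length
    have hl₁ : (t₁.toList.take (i₁ : ℕ)).length = (i₁ : ℕ) := by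
      simp [ht₁]; omega
    have hl₂ : (t₂.toList.take (i₂ : ℕ)).length = (i₂ : ℕ) := by
      simp [ht₂]; omega
    have hlen₂ : (t₂.toList.take (i₂ : ℕ)).length + 2 * k + (t₂.toList.drop (i₂ : ℕ)).length = 3 * k - 1 := by
      simp [hl₂, ht₂]; omega
    have hlen₁ : (t₁.toList.take (i₁ : ℕ)).length + 2 * k + (t₁.toList.drop (i₁ : ℕ)).length = 3 * k - 1 := by
      simp [hl₁, ht₁]; omega
    have hle : (t₁.toList.take (i₁ : ℕ)).length = (t₂.toList.take (i₂ : ℕ)).length := by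
      by_contra hne
      rcases Nat.lt_or_ge (t₁.toList.take (i₁:ℕ)).length (t₂.toList.take (i₂:ℕ)).length with h' | h'
      · exact occ_not_lt k _ _ _ _ hEq hlen₂ h'
      · exact occ_not_lt k _ _ _ _ hEq.symm hlen₁ (lt_of_le_of_ne h' (Ne.symm hne))
    obtain ⟨hu, hv⟩ := List.append_inj hEq hle
    have hv' : t₁.toList.drop (i₁ : ℕ) = t₂.toList.drop (i₂ : ℕ) :=
      List.append_cancel_left hv
    have hi : i₁ = i₂ := by
      apply Fin.ext; rw [← hl₁, ← hl₂, hle]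
    have ht : t₁ = t₂ := by
      have : t₁.toList = t₂.toList := by
        rw [← List.take_append_drop (i₁ : ℕ) t₁.toList, ← List.take_append_drop (i₂ : ℕ) t₂.toList,
          hu, hv']
      exact List.Vector.toList_injective this
    rw [hi, ht]
  have hset : {w : List Bool | w.length = 3 * k - 1 ∧ f <:+: w} =
      ↑(Finset.image F Finset.univ) := by
    ext w
    simp only [Set.mem_setOf_eq, Finset.coe_image, Finset.coe_univ, Set.image_univ,
      Set.mem_range]
    constructor
    · rintro ⟨hwl, u, v, huv⟩
      have hulen : u.length + 2 * k + v.length = 3 * k - 1 := by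
        have := congrArg List.length huv
        simp [hfl] at this
        omega
      have hu : u.length < k := by omega
      refine ⟨⟨⟨u.length, hu⟩, ⟨u ++ v, by simp; omega⟩⟩, ?_⟩
      simp only [hF]
      show (u ++ v).take u.length ++ (f ++ (u ++ v).drop u.length) = w
      rw [List.take_left, List.drop_left, ← huv]
      simp [List.append_assoc]
    · rintro ⟨⟨i, t⟩, rfl⟩
      constructor
      · simp only [hF]
        have := t.toList_length
        simp [hfl, this]
        omega
      · exact ⟨t.toList.take i, t.toList.drop i, by simp [hF, List.append_assoc]⟩
  rw [hset, Set.ncard_coe_finset, Finset.card_image_of_injOn hinj, Finset.card_univ]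
  simp [card_vector]
end

section
/- For every integer k ≥ 2, the number of binary strings of length 3k−1 that contain 0^{k+1} 1^{k−1} as a consecutive substring equals k·2^{k−1}. -/
abbrev fL (m : ℕ) : List Bool := List.replicate (m+3) false ++ List.replicate (m+1) true

lemma fL_length (m : ℕ) : (fL m).length = 2*m+4 := by simp [fL]; omega

lemma fL_lo (m d : ℕ) (hd : d ≤ m+2) : (fL m)[d]? = some false := by
  rw [fL, List.getElem?_append_left (by simp; omega)]
  simp [List.getElem?_replicate]
  omega

lemma fL_hi (m : ℕ) : (fL m)[m+3]? = some true := by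
  rw [fL, List.getElem?_append_right (by simp)]
  simp

lemma occ_val (m : ℕ) (u t : List Bool) (d : ℕ) (hd : d < 2*m+4) :
    (u ++ (fL m ++ t))[u.length + d]? = (fL m)[d]? := by
  rw [List.getElem?_append_right (by omega)]
  rw [Nat.add_sub_cancel_left]
  rw [List.getElem?_append_left (by rw [fL_length]; omega)]

lemma unique_pos (m : ℕ) (u1 t1 u2 t2 : List Bool)
    (h : u1 ++ (fL m ++ t1) = u2 ++ (fL m ++ t2))
    (h1 : u1.length ≤ m+1) (h2 : u2.length ≤ m+1) : u1.length = u2.length := by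
  by_contra hne
  wlog hlt : u1.length < u2.length
  · exact this m u2 t2 u1 t1 h.symm h2 h1 (Ne.symm hne) (by omega)
  have e1 : (u1 ++ (fL m ++ t1))[u1.length + (m+3)]? = some true := by
    rw [occ_val m u1 t1 _ (by omega), fL_hi]
  have e2 : (u2 ++ (fL m ++ t2))[u1.length + (m+3)]? = some false := by
    have heq : u1.length + (m+3) = u2.length + (u1.length + m + 3 - u2.length) := by omega
    rw [heq, occ_val m u2 t2 _ (by omega)]
    exact fL_lo m _ (by omega)
  rw [h, e2] at e1
  simp at e1

theorem stmt8 (k : ℕ) (hk : 2 ≤ k) :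
    {w : List Bool | w.length = 3 * k - 1 ∧
      (List.replicate (k + 1) false ++ List.replicate (k - 1) true) <:+: w}.ncard
      = k * 2 ^ (k - 1) := by
  obtain ⟨m, rfl⟩ : ∃ m, k = m + 2 := ⟨k - 2, by omega⟩
  have ha : (m+2) + 1 = m + 3 := by omega
  have hb : (m+2) - 1 = m + 1 := by omega
  have hc : 3 * (m+2) - 1 = 3*m + 5 := by omega
  rw [ha, hb, hc]
  set g : Fin (m+2) × List.Vector Bool (m+1) → List Bool :=
    fun p => p.2.1.take p.1 ++ (fL m ++ p.2.1.drop p.1) with hg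
  have hinj : Function.Injective g := by
    rintro ⟨i, v⟩ ⟨j, u⟩ h
    simp only [hg] at h
    have hv : v.1.length = m+1 := v.2
    have hu : u.1.length = m+1 := u.2
    have hti : (v.1.take i).length = i.1 := by simp [hv]; omega
    have htj : (u.1.take j).length = j.1 := by simp [hu]; omega
    have hij : i.1 = j.1 := by
      have := unique_pos m _ _ _ _ h (by rw [hti]; omega) (by rw [htj]; omega)
      rwa [hti, htj] at this
    have hlen : (v.1.take i).length = (u.1.take j).length := by rw [hti, htj, hij]
    obtain ⟨h1, h2⟩ := List.append_inj h hlen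
    have h3 : v.1.drop i = u.1.drop j := by
      exact List.append_cancel_left h2
    have hvu : v.1 = u.1 := by
      rw [← List.take_append_drop i.1 v.1, ← List.take_append_drop j.1 u.1, h1, h3]
    simp only [Prod.mk.injEq]
    exact ⟨Fin.ext hij, Subtype.ext hvu⟩
  have hset : {w : List Bool | w.length = 3*m + 5 ∧
      (List.replicate (m+3) false ++ List.replicate (m+1) true) <:+: w} = Set.range g := by
    ext w
    simp only [Set.mem_setOf_eq, Set.mem_range]
    constructor
    · rintro ⟨hlen, u, t, rfl⟩
      have hl : u.length + t.length = m + 1 := by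
        simp [fL_length] at hlen ⊢
        omega
      refine ⟨⟨⟨u.length, by omega⟩, ⟨u ++ t, by simp; omega⟩⟩, ?_⟩
      simp only [hg]
      rw [List.take_left, List.drop_left]
      simp [List.append_assoc]
    · rintro ⟨⟨i, v⟩, rfl⟩
      constructor
      · simp only [hg]
        have hv : v.1.length = m+1 := v.2
        simp [fL_length, hv]
        omega
      · exact ⟨_, _, by rw [List.append_assoc]⟩
  rw [hset, ← Nat.card_coe_set_eq, Nat.card_range_of_injective hinj]
  simp [Nat.card_eq_fintype_card, card_vector]
end

section
/- For all integers k ≥ 1 and d ≥ k+1, the number of binary strings of length d that do not contain 0^k as a consecutive substring is strictly smaller than the number of binary strings of length d that do not contain 0^k 1 as a consecutive substring. -/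
theorem stmt10 (k d : ℕ) (hk : 1 ≤ k) (hd : k + 1 ≤ d) :
    {w : List Bool | w.length = d ∧ ¬ List.replicate k false <:+: w}.ncard <
    {w : List Bool | w.length = d ∧ ¬ (List.replicate k false ++ [true]) <:+: w}.ncard := by
  have hfin : {w : List Bool | w.length = d ∧ ¬ (List.replicate k false ++ [true]) <:+: w}.Finite :=
    (List.finite_length_eq Bool d).subset fun w hw => hw.1
  apply Set.ncard_lt_ncard _ hfin
  constructor
  · rintro w ⟨h1, h2⟩
    refine ⟨h1, fun h => h2 ?_⟩
    exact ((List.prefix_append _ _).isInfix).trans h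
  · intro hsub
    have hmem : List.replicate d false ∈
        {w : List Bool | w.length = d ∧ ¬ (List.replicate k false ++ [true]) <:+: w} := by
      refine ⟨List.length_replicate, fun h => ?_⟩
      have : (true : Bool) ∈ List.replicate d false := h.subset (by simp)
      simpa using List.eq_of_mem_replicate this
    have := hsub hmem
    exact this.2 ⟨[], List.replicate (d - k) false, by
      rw [List.nil_append, ← List.replicate_add]; congr 1; omega⟩
end

section
/- Let d ≥ 2 and let f = f_1…f_{d−1} be a binary string of length d−1. Then the Hamming distance between the two strings f̄_1·f and f·f̄_{d−1} (each of length d, where b̄ denotes the complement of the bit b) equals ν(f) + 2. -/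
lemma aux13 : ∀ (f : List Bool) (b t : Bool), f ≠ [] →
    (List.zipWith (fun a b => a != b) (b :: f) (f ++ [t])).count true
      = (if b != f.head! then 1 else 0) + nu f + (if f.getLast! != t then 1 else 0) := by
  intro f
  induction f with
  | nil => simp
  | cons a f' ih =>
    intro b t _
    cases f' with
    | nil => cases a <;> cases b <;> cases t <;> decide
    | cons c f'' =>
      have h2 := ih a t (by simp)
      have hl : (a :: c :: f'').getLast! = (c :: f'').getLast! := by
        simp [List.getLast!]
      rw [hl]
      simp only [List.cons_append, List.zipWith_cons_cons, List.count_cons,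
        beq_true] at *
      have hnu : nu (a :: c :: f'') = (if a != c then 1 else 0) + nu (c :: f'') := by
        simp [nu, List.count_cons]
        cases a <;> cases c <;> simp [Nat.add_comm]
      rw [hnu]
      simp only [List.head!] at *
      rw [h2]; cases a <;> cases b <;> simp <;> omega

theorem stmt13 (d : ℕ) (hd : 2 ≤ d) (f : List Bool) (hf : f.length = d - 1) :
    hDist ((!f.head!) :: f) (f ++ [!f.getLast!]) = nu f + 2 := by
  have hne : f ≠ [] := by
    intro h; subst h; simp at hf; omega
  have := aux13 f (!f.head!) (!f.getLast!) hne
  unfold hDist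
  rw [this]
  simp
  omega
end

section
/- Let d ≥ 2 and let f be a binary string of length d−1 with ν(f) ≥ 2. Then the generalized Fibonacci cube Q_d(f) has exactly d·2^{d−1} − (4d − 2) edges. -/
open Finset

instance (v w : List Bool) : Decidable (cubeRel v w) := by
  unfold cubeRel; infer_instance

lemma hDist_nil_left (w : List Bool) : hDist [] w = 0 := by simp [hDist]

lemma hDist_nil_right (v : List Bool) : hDist v [] = 0 := by cases v <;> simp [hDist]

lemma hDist_cons (a b : Bool) (v w : List Bool) :
    hDist (a :: v) (b :: w) = (if a = b then 0 else 1) + hDist v w := by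
  cases a <;> cases b <;> simp [hDist, List.count_cons] <;> omega

lemma hDist_self (v : List Bool) : hDist v v = 0 := by
  induction v with
  | nil => simp [hDist]
  | cons a v ih => rw [hDist_cons]; simp [ih]

lemma hDist_comm (v w : List Bool) : hDist v w = hDist w v := by
  induction v generalizing w with
  | nil => rw [hDist_nil_left, hDist_nil_right]
  | cons a v ih =>
    cases w with
    | nil => rw [hDist_nil_left, hDist_nil_right]
    | cons b w => rw [hDist_cons, hDist_cons, ih]; congr 1; by_cases h : a = b <;> simp [h, Ne.symm, eq_comm]

lemma hDist_eq_zero {v w : List Bool} (h : v.length = w.length) :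
    hDist v w = 0 ↔ v = w := by
  induction v generalizing w with
  | nil => cases w with
    | nil => simp [hDist]
    | cons b w => simp at h
  | cons a v ih =>
    cases w with
    | nil => simp at h
    | cons b w =>
      rw [hDist_cons]
      simp only [List.length_cons, Nat.add_right_cancel_iff] at h
      by_cases hab : a = b
      · simp [hab, ih h]
      · simp [hab]


/-- All binary lists of length `n`. -/
def allLists : ℕ → Finset (List Bool)
  | 0 => {[]}
  | n + 1 => ((allLists n).image (List.cons false)) ∪ ((allLists n).image (List.cons true))

lemma mem_allLists (n : ℕ) (w : List Bool) : w ∈ allLists n ↔ w.length = n := by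
  induction n generalizing w with
  | zero => cases w <;> simp [allLists]
  | succ n ih =>
    cases w with
    | nil => simp [allLists, ih]
    | cons a w => cases a <;> simp [allLists, ih]

lemma card_allLists (n : ℕ) : (allLists n).card = 2 ^ n := by
  induction n with
  | zero => simp [allLists]
  | succ n ih =>
    have hinj : Function.Injective (List.cons (α := Bool) false) := fun x y h => by
      simpa using h
    have hinj' : Function.Injective (List.cons (α := Bool) true) := fun x y h => by
      simpa using h
    have hdisj : Disjoint ((allLists n).image (List.cons false))
        ((allLists n).image (List.cons true)) := by
      rw [Finset.disjoint_left]
      intro x hx hy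
      simp only [Finset.mem_image] at hx hy
      obtain ⟨u, _, rfl⟩ := hx
      obtain ⟨v, _, hv⟩ := hy
      simp at hv
    rw [allLists, Finset.card_union_of_disjoint hdisj,
      Finset.card_image_of_injective _ hinj, Finset.card_image_of_injective _ hinj', ih]
    ring

lemma filter_hDist_zero (v : List Bool) :
    ((allLists v.length).filter (fun w => hDist v w = 0)) = {v} := by
  ext w
  simp only [Finset.mem_filter, mem_allLists, Finset.mem_singleton]
  constructor
  · rintro ⟨hl, h0⟩
    exact ((hDist_eq_zero hl.symm).mp h0).symm
  · rintro rfl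
    exact ⟨rfl, hDist_self _⟩

lemma card_flip (v : List Bool) :
    ((allLists v.length).filter (fun w => hDist v w = 1)).card = v.length := by
  induction v with
  | nil => simp [allLists, hDist]
  | cons a v ih =>
    have key : ∀ b : Bool,
        (((allLists v.length).image (List.cons b)).filter
          (fun w => hDist (a :: v) w = 1)).card =
        if a = b then v.length else 1 := by
      intro b
      have hinj : Function.Injective (List.cons (α := Bool) b) := fun x y h => by
        simpa using h
      rw [Finset.filter_image, Finset.card_image_of_injective _ hinj]
      by_cases hab : a = b
      · subst hab
        simp only [hDist_cons, eq_self_iff_true, if_true, Nat.zero_add]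
        exact ih
      · simp only [if_neg hab]
        simp only [hDist_cons, if_neg hab]
        have hcong : ∀ w ∈ allLists v.length,
            (1 + hDist v w = 1) = (hDist v w = 0) := by
          intro w _
          exact propext (Iff.intro (fun h => by omega) (fun h => by omega))
        rw [Finset.filter_congr (fun w hw => by rw [hcong w hw]),
          filter_hDist_zero]
        simp
    show (((allLists v.length).image (List.cons false) ∪
        (allLists v.length).image (List.cons true)).filter
        (fun w => hDist (a :: v) w = 1)).card = v.length + 1
    rw [Finset.filter_union, Finset.card_union_of_disjoint]
    · rw [key false, key true]
      cases a <;> simp <;> omega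
    · apply Finset.disjoint_filter_filter
      rw [Finset.disjoint_left]
      intro x hx hy
      simp only [Finset.mem_image] at hx hy
      obtain ⟨u, _, rfl⟩ := hx
      obtain ⟨v', _, hv⟩ := hy
      simp at hv

lemma nu_cons_cons (a b : Bool) (l : List Bool) :
    nu (a :: b :: l) = (if a = b then 0 else 1) + nu (b :: l) := by
  cases a <;> cases b <;> simp [nu, List.count_cons] <;> omega

/-- Auxiliary penalty for the head. -/
def headPen : List Bool → Bool → ℕ
  | [], _ => 0
  | a :: _, c => if a = c then 0 else 1

lemma nu_le_hDist_aux : ∀ (f : List Bool) (b c : Bool),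
    nu f + headPen f c ≤ hDist (f ++ [b]) (c :: f) := by
  intro f
  induction f with
  | nil => intro b c; simp [nu, headPen]
  | cons a f ih =>
    intro b c
    have h1 : hDist ((a :: f) ++ [b]) (c :: a :: f)
        = (if a = c then 0 else 1) + hDist (f ++ [b]) (a :: f) := by
      rw [List.cons_append, hDist_cons]
    rw [h1]
    have h2 : nu (a :: f) ≤ nu f + headPen f a := by
      cases f with
      | nil => simp [nu, headPen]
      | cons a' f' =>
        rw [nu_cons_cons]
        simp only [headPen]
        by_cases h : a = a'
        · simp [h]
        · simp [h, Ne.symm h]; omega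
    have h3 := ih b a
    show nu (a :: f) + headPen (a :: f) c ≤ _
    simp only [headPen]
    omega

lemma two_le_hDist {f : List Bool} (hnu : 2 ≤ nu f) (b c : Bool) :
    2 ≤ hDist (f ++ [b]) (c :: f) :=
  le_trans (le_trans hnu (Nat.le_add_right _ _)) (nu_le_hDist_aux f b c)

lemma hDist_append_last (f : List Bool) :
    hDist (f ++ [false]) (f ++ [true]) = 1 := by
  induction f with
  | nil => simp [hDist]
  | cons a f ih => rw [List.cons_append, List.cons_append, hDist_cons, ih]; simp

lemma hDist_cons_head (f : List Bool) :
    hDist (false :: f) (true :: f) = 1 := by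
  rw [hDist_cons, hDist_self]; simp

lemma infix_iff_of_len {f w : List Bool} (hw : w.length = f.length + 1) :
    f <:+: w ↔ (∃ b, w = f ++ [b]) ∨ (∃ c, w = c :: f) := by
  constructor
  · rintro ⟨s, t, rfl⟩
    simp only [List.length_append] at hw
    rcases s with _ | ⟨x, s⟩
    · left
      have : t.length = 1 := by simp only [List.length_nil] at hw; omega
      obtain ⟨b, rfl⟩ := List.length_eq_one_iff.mp this
      exact ⟨b, by simp⟩
    · right
      have hs : s.length = 0 ∧ t.length = 0 := by
        simp only [List.length_cons] at hw; omega
      have : s = [] := List.length_eq_zero_iff.mp hs.1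
      have ht : t = [] := List.length_eq_zero_iff.mp hs.2
      subst this; subst ht
      exact ⟨x, by simp⟩
  · rintro (⟨b, rfl⟩ | ⟨c, rfl⟩)
    · exact ⟨[], [b], by simp⟩
    · exact ⟨[c], [], by simp⟩

/-- The four forbidden strings of length `d`. -/
def badF (f : List Bool) : Finset (List Bool) :=
  {f ++ [false], f ++ [true], false :: f, true :: f}

lemma app_ne_cons {f : List Bool} (hnu : 2 ≤ nu f) (b c : Bool) :
    f ++ [b] ≠ c :: f := by
  intro h
  have h2 := two_le_hDist hnu b c
  rw [h, hDist_self] at h2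
  omega

lemma bad_subset {d : ℕ} {f : List Bool} (hf : f.length + 1 = d) :
    badF f ⊆ allLists d := by
  intro w hw
  rw [mem_allLists]
  simp only [badF, Finset.mem_insert, Finset.mem_singleton] at hw
  rcases hw with rfl | rfl | rfl | rfl <;> simp <;> omega

lemma filter_infix_eq {d : ℕ} {f : List Bool} (hf : f.length + 1 = d) :
    (allLists d).filter (fun w => f <:+: w) = badF f := by
  ext w
  simp only [Finset.mem_filter, mem_allLists, badF, Finset.mem_insert, Finset.mem_singleton]
  constructor
  · rintro ⟨hl, hi⟩
    rw [infix_iff_of_len (by omega)] at hi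
    rcases hi with ⟨b, rfl⟩ | ⟨c, rfl⟩
    · cases b
      · exact Or.inl rfl
      · exact Or.inr (Or.inl rfl)
    · cases c
      · exact Or.inr (Or.inr (Or.inl rfl))
      · exact Or.inr (Or.inr (Or.inr rfl))
  · rintro (rfl | rfl | rfl | rfl)
    · exact ⟨by simp; omega, ⟨[], [false], by simp⟩⟩
    · exact ⟨by simp; omega, ⟨[], [true], by simp⟩⟩
    · exact ⟨by simp; omega, ⟨[false], [], by simp⟩⟩
    · exact ⟨by simp; omega, ⟨[true], [], by simp⟩⟩

lemma good_eq {d : ℕ} {f : List Bool} (hf : f.length + 1 = d) :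
    (allLists d).filter (fun w => ¬ f <:+: w) = allLists d \ badF f := by
  rw [Finset.filter_not, filter_infix_eq hf]

lemma card_badF {f : List Bool} (hnu : 2 ≤ nu f) : (badF f).card = 4 := by
  have e1 : (f ++ [false] : List Bool) ≠ f ++ [true] := by simp
  have d1 : (f ++ [false]) ∉ ({f ++ [true], false :: f, true :: f} : Finset (List Bool)) := by
    simp only [Finset.mem_insert, Finset.mem_singleton]
    push_neg
    exact ⟨e1, app_ne_cons hnu false false, app_ne_cons hnu false true⟩
  have d2 : (f ++ [true]) ∉ ({false :: f, true :: f} : Finset (List Bool)) := by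
    simp only [Finset.mem_insert, Finset.mem_singleton]
    push_neg
    exact ⟨app_ne_cons hnu true false, app_ne_cons hnu true true⟩
  have d3 : (false :: f) ∉ ({true :: f} : Finset (List Bool)) := by simp
  rw [badF, Finset.card_insert_of_notMem d1, Finset.card_insert_of_notMem d2,
    Finset.card_insert_of_notMem d3, Finset.card_singleton]

lemma card_good {d : ℕ} {f : List Bool} (hf : f.length + 1 = d) (hnu : 2 ≤ nu f) :
    ((allLists d).filter (fun w => ¬ f <:+: w)).card + 4 = 2 ^ d := by
  rw [good_eq hf, ← card_badF (f := f) hnu, ← card_allLists d]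
  exact Finset.card_sdiff_add_card_eq_card (bad_subset hf)

lemma sum_bad {f : List Bool} (hnu : 2 ≤ nu f) :
    ∑ u ∈ badF f, ((badF f).filter (fun w => hDist u w = 1)).card = 4 := by
  have n1 : hDist (f ++ [false]) (f ++ [true]) = 1 := hDist_append_last f
  have n1' : hDist (f ++ [true]) (f ++ [false]) = 1 := by rw [hDist_comm]; exact n1
  have n2 : hDist (false :: f) (true :: f) = 1 := hDist_cons_head f
  have n2' : hDist (true :: f) (false :: f) = 1 := by rw [hDist_comm]; exact n2
  have nac : ∀ b c : Bool, ¬ (hDist (f ++ [b]) (c :: f) = 1) := by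
    intro b c h
    have := two_le_hDist hnu b c
    omega
  have nca : ∀ b c : Bool, ¬ (hDist (c :: f) (f ++ [b]) = 1) := by
    intro b c
    rw [hDist_comm]
    exact nac b c
  have nself : ∀ x : List Bool, ¬ (hDist x x = 1) := by
    intro x
    rw [hDist_self]
    omega
  have e1 : (f ++ [false] : List Bool) ≠ f ++ [true] := by simp
  have d1 : (f ++ [false]) ∉ ({f ++ [true], false :: f, true :: f} : Finset (List Bool)) := by
    simp only [Finset.mem_insert, Finset.mem_singleton]
    push_neg
    exact ⟨e1, app_ne_cons hnu false false, app_ne_cons hnu false true⟩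
  have d2 : (f ++ [true]) ∉ ({false :: f, true :: f} : Finset (List Bool)) := by
    simp only [Finset.mem_insert, Finset.mem_singleton]
    push_neg
    exact ⟨app_ne_cons hnu true false, app_ne_cons hnu true true⟩
  have d3 : (false :: f) ∉ ({true :: f} : Finset (List Bool)) := by simp
  rw [badF]
  rw [Finset.sum_insert d1, Finset.sum_insert d2, Finset.sum_insert d3,
    Finset.sum_singleton]
  simp only [Finset.card_filter, Finset.sum_insert d1, Finset.sum_insert d2,
    Finset.sum_insert d3, Finset.sum_singleton]
  simp [n1, n1', n2, n2', nac, nca, nself]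

lemma main_count (d : ℕ) (f : List Bool) (hf : f.length + 1 = d) (hnu : 2 ≤ nu f) :
    (∑ w ∈ (allLists d).filter (fun w => ¬ f <:+: w),
        (((allLists d).filter (fun w => ¬ f <:+: w)).filter (fun u => hDist w u = 1)).card)
      + 4 * d
    = d * ((allLists d).filter (fun w => ¬ f <:+: w)).card + 4 := by
  set S := allLists d with hS
  set B := badF f with hB
  set G := S.filter (fun w => ¬ f <:+: w) with hG
  have hsub : B ⊆ S := bad_subset hf
  have hGeq : G = S \ B := good_eq hf
  have hdisj : Disjoint G B := by rw [hGeq]; exact Finset.sdiff_disjoint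
  have hunion : G ∪ B = S := by rw [hGeq]; exact Finset.sdiff_union_of_subset hsub
  have hvert : ∀ v : List Bool, v.length = d →
      (G.filter (fun u => hDist v u = 1)).card + (B.filter (fun u => hDist v u = 1)).card
        = d := by
    intro v hv
    rw [← Finset.card_union_of_disjoint (Finset.disjoint_filter_filter hdisj),
      ← Finset.filter_union, hunion]
    have h := card_flip v
    rw [hv] at h
    exact h
  have hlenG : ∀ w ∈ G, w.length = d := fun w hw =>
    (mem_allLists d w).mp (Finset.mem_filter.mp hw).1
  have hlenB : ∀ w ∈ B, w.length = d := fun w hw => (mem_allLists d w).mp (hsub hw)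
  have e1 : (∑ w ∈ G, (G.filter (fun u => hDist w u = 1)).card)
      + (∑ w ∈ G, (B.filter (fun u => hDist w u = 1)).card) = d * G.card := by
    rw [← Finset.sum_add_distrib,
      Finset.sum_congr rfl (fun w hw => hvert w (hlenG w hw)),
      Finset.sum_const, smul_eq_mul, mul_comm]
  have e2 : (∑ u ∈ B, (G.filter (fun w => hDist u w = 1)).card)
      + (∑ u ∈ B, (B.filter (fun w => hDist u w = 1)).card) = d * B.card := by
    rw [← Finset.sum_add_distrib,
      Finset.sum_congr rfl (fun u hu => hvert u (hlenB u hu)),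
      Finset.sum_const, smul_eq_mul, mul_comm]
  have e3 : (∑ w ∈ G, (B.filter (fun u => hDist w u = 1)).card)
      = ∑ u ∈ B, (G.filter (fun w => hDist u w = 1)).card := by
    simp_rw [Finset.card_filter]
    rw [Finset.sum_comm]
    exact Finset.sum_congr rfl fun u _ => Finset.sum_congr rfl fun w _ => by
      rw [hDist_comm]
  have e4 : (∑ u ∈ B, (B.filter (fun w => hDist u w = 1)).card) = 4 := sum_bad hnu
  have e5 : B.card = 4 := card_badF hnu
  rw [e5] at e2
  generalize d * G.card = P at e1 ⊢
  omega

theorem stmt17 (d : ℕ) (hd : 2 ≤ d) (f : List Bool) (hf : f.length = d - 1)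
    (hnu : 2 ≤ nu f) :
    ((genFib d f).edgeSet.ncard : ℤ) = d * 2 ^ (d - 1) - (4 * d - 2) := by
  have hf1 : f.length + 1 = d := by omega
  have hmem : ∀ w : List Bool,
      w ∈ (allLists d).filter (fun w => ¬ f <:+: w) ↔ (w.length = d ∧ ¬ f <:+: w) := by
    intro w
    rw [Finset.mem_filter, mem_allLists]
  letI instV : Fintype {w : List Bool // w.length = d ∧ ¬ f <:+: w} :=
    Fintype.subtype _ hmem
  letI instD : DecidableRel (genFib d f).Adj := fun v w =>
    inferInstanceAs (Decidable (v ≠ w ∧ (cubeRel v.1 w.1 ∨ cubeRel w.1 v.1)))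
  have adj_iff : ∀ v w : {w : List Bool // w.length = d ∧ ¬ f <:+: w},
      (genFib d f).Adj v w ↔ hDist v.1 w.1 = 1 := by
    intro v w
    rw [show (genFib d f).Adj v w ↔ v ≠ w ∧ (cubeRel v.1 w.1 ∨ cubeRel w.1 v.1) from
      SimpleGraph.fromRel_adj _ v w]
    constructor
    · rintro ⟨hne, h | h⟩
      · exact h
      · rw [hDist_comm]; exact h
    · intro h
      refine ⟨?_, Or.inl h⟩
      rintro rfl
      rw [show hDist v.1 v.1 = 0 from hDist_self _] at h
      omega
  have hdeg : ∀ v : {w : List Bool // w.length = d ∧ ¬ f <:+: w},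
      (genFib d f).degree v =
        (((allLists d).filter (fun w => ¬ f <:+: w)).filter
          (fun u => hDist v.1 u = 1)).card := by
    intro v
    have h1 : (genFib d f).degree v
        = (Finset.univ.filter ((genFib d f).Adj v)).card := by
      rw [← SimpleGraph.neighborFinset_eq_filter]
      rfl
    rw [h1]
    apply Finset.card_bij (fun w _ => w.1)
    · intro w hw
      rw [Finset.mem_filter] at hw
      rw [Finset.mem_filter, hmem]
      exact ⟨w.2, (adj_iff v w).mp hw.2⟩
    · intro w1 _ w2 _ h
      exact Subtype.ext h
    · intro u hu
      rw [Finset.mem_filter, hmem] at hu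
      refine ⟨⟨u, hu.1⟩, ?_, rfl⟩
      rw [Finset.mem_filter]
      exact ⟨Finset.mem_univ _, (adj_iff v ⟨u, hu.1⟩).mpr hu.2⟩
  have hsum : ∑ v : {w : List Bool // w.length = d ∧ ¬ f <:+: w},
      (genFib d f).degree v
      = ∑ w ∈ (allLists d).filter (fun w => ¬ f <:+: w),
        (((allLists d).filter (fun w => ¬ f <:+: w)).filter
          (fun u => hDist w u = 1)).card := by
    rw [Finset.sum_congr rfl (fun v _ => hdeg v)]
    exact (Finset.sum_subtype _ hmem (fun w =>
      (((allLists d).filter (fun w => ¬ f <:+: w)).filter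
        (fun u => hDist w u = 1)).card)).symm
  have key : 2 * (genFib d f).edgeFinset.card + 4 * d
      = d * ((allLists d).filter (fun w => ¬ f <:+: w)).card + 4 := by
    rw [← SimpleGraph.sum_degrees_eq_twice_card_edges, hsum]
    exact main_count d f hf1 hnu
  have hcard := card_good hf1 hnu
  rw [show (genFib d f).edgeSet.ncard = (genFib d f).edgeFinset.card from
    Set.ncard_eq_toFinset_card' _]
  have h2 : (2 : ℤ) ^ d = 2 * 2 ^ (d - 1) := by
    have hd1 : d - 1 + 1 = d := by omega
    calc (2:ℤ)^d = 2^(d-1+1) := by rw [hd1]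
    _ = 2 * 2^(d-1) := pow_succ' 2 _
  have k1 : (2 : ℤ) * (genFib d f).edgeFinset.card + 4 * d
      = d * (((allLists d).filter (fun w => ¬ f <:+: w)).card : ℤ) + 4 := by
    exact_mod_cast key
  have k2 : (((allLists d).filter (fun w => ¬ f <:+: w)).card : ℤ) = 2 ^ d - 4 := by
    have : ((((allLists d).filter (fun w => ¬ f <:+: w)).card : ℤ)) + 4 = 2 ^ d := by
      exact_mod_cast hcard
    linarith
  rw [k2, h2] at k1
  ring_nf at k1 ⊢
  linarith
end

section
/- Let k ≥ 2 and let α be the map on binary strings of length 3k−1 defined by α(u_1…u_{3k−1}) = u_1…u_k ū_{2k} u_{k+1}…u_{2k−1} u_{2k+1}…u_{3k−1} (i.e., the bit u_{2k} is complemented and moved to position k+1, shifting u_{k+1},…,u_{2k−1} one position to the right). Then for every binary string u of length 3k−1 that does not contain 0^k 1^k as a consecutive substring, the string α(u) does not contain 0^{k+1} 1^{k−1} as a consecutive substring. -/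
theorem stmt18 (k : ℕ) (hk : 2 ≤ k) (u : List Bool) (hu : u.length = 3 * k - 1)
    (h : ¬ (List.replicate k false ++ List.replicate k true) <:+: u) :
    ¬ (List.replicate (k + 1) false ++ List.replicate (k - 1) true) <:+:
      (u.take k ++ (!(u.getD (2 * k - 1) false)) ::
        ((u.drop k).take (k - 1) ++ u.drop (2 * k))) := by
  obtain ⟨n, rfl⟩ : ∃ n, k = n + 2 := ⟨k - 2, by omega⟩
  intro hinf
  apply h
  have hlu : u.length = 3 * n + 5 := by omega
  set b := u.getD (2 * (n + 2) - 1) false with hbdef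
  set w := (u.take (n + 2) ++ (!b) ::
      ((u.drop (n + 2)).take (n + 2 - 1) ++ u.drop (2 * (n + 2)))) with hwdef
  obtain ⟨s, t, hst⟩ := hinf
  have hA : (u.take (n + 2)).length = n + 2 := by rw [List.length_take]; omega
  have hB : ((u.drop (n + 2)).take (n + 2 - 1)).length = n + 1 := by
    simp only [List.length_take, List.length_drop, hlu]; omega
  have hlw : w.length = 3 * n + 5 := by
    rw [hwdef]
    simp only [List.length_append, List.length_cons, hA, hB, List.length_drop, hlu]
    omega
  have hi : s.length ≤ n + 1 := by
    have := congrArg List.length hst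
    simp only [List.length_append, List.length_replicate, hlw] at this
    omega
  -- w to u element relations
  have e1 : ∀ m, m < n + 2 → w[m]? = u[m]? := by
    intro m hm
    rw [hwdef, List.getElem?_append_left (by rw [hA]; omega), List.getElem?_take,
      if_pos (by omega)]
  have e2 : w[n + 2]? = some (!b) := by
    rw [hwdef, List.getElem?_append_right (by rw [hA]), hA]
    simp
  have e3 : ∀ j, j ≤ n → w[n + 3 + j]? = u[n + 2 + j]? := by
    intro j hj
    rw [hwdef, List.getElem?_append_right (by rw [hA]; omega), hA,
      show n + 3 + j - (n + 2) = j + 1 from by omega, List.getElem?_cons,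
      if_neg (by omega), Nat.add_sub_cancel,
      List.getElem?_append_left (by rw [hB]; omega), List.getElem?_take,
      if_pos (by omega), List.getElem?_drop]
  have e4 : ∀ j, w[2 * n + 4 + j]? = u[2 * n + 4 + j]? := by
    intro j
    rw [hwdef, List.getElem?_append_right (by rw [hA]; omega), hA,
      show 2 * n + 4 + j - (n + 2) = n + 2 + j from by omega, List.getElem?_cons,
      if_neg (by omega), show n + 2 + j - 1 = n + 1 + j from by omega,
      List.getElem?_append_right (by rw [hB]; omega), hB,
      show n + 1 + j - (n + 1) = j from by omega, List.getElem?_drop,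
      show 2 * (n + 2) + j = 2 * n + 4 + j from by omega]
  -- pattern values in w
  have hw : ∀ j, j < 2 * n + 4 → w[s.length + j]? =
      if j < n + 3 then some false else some true := by
    intro j hj
    rw [← hst, List.append_assoc,
      List.getElem?_append_right (Nat.le_add_right _ _), Nat.add_sub_cancel_left,
      List.getElem?_append_left (by simp [List.length_append]; omega)]
    by_cases hc : j < n + 3
    · rw [List.getElem?_append_left (by simp; omega), List.getElem?_replicate,
        if_pos (by omega), if_pos hc]
    · rw [List.getElem?_append_right (by simp; omega), List.getElem?_replicate,
        if_pos (by simp; omega), if_neg hc]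
  have hb2 : u[2 * n + 3]? = some b := by
    rw [hbdef, show 2 * (n + 2) - 1 = 2 * n + 3 from by omega,
      List.getD_eq_getElem u false (by omega),
      List.getElem?_eq_getElem (by omega : 2 * n + 3 < u.length)]
  have hbtrue : b = true := by
    have h1 : w[n + 2]? = some false := by
      have := hw (n + 2 - s.length) (by omega)
      rw [show s.length + (n + 2 - s.length) = n + 2 from by omega] at this
      rw [this, if_pos (by omega)]
    rw [e2] at h1
    simpa using h1
  have key : (List.replicate (n + 2) false ++ List.replicate (n + 2) true) =
      (u.drop s.length).take (2 * n + 4) := by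
    apply List.ext_getElem?
    intro m
    rw [List.getElem?_take]
    by_cases h1 : m < n + 2
    · rw [if_pos (by omega), List.getElem?_drop,
        List.getElem?_append_left (by simp; omega), List.getElem?_replicate,
        if_pos h1]
      by_cases hc : s.length + m < n + 2
      · rw [← e1 _ hc, hw m (by omega), if_pos (by omega)]
      · obtain ⟨j, hj, hje⟩ : ∃ j, j ≤ n ∧ s.length + m = n + 2 + j :=
          ⟨s.length + m - (n + 2), by omega, by omega⟩
        rw [hje, ← e3 j hj, show n + 3 + j = s.length + (m + 1) from by omega,
          hw (m + 1) (by omega), if_pos (by omega)]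
    · by_cases h2 : m < 2 * n + 4
      · rw [if_pos h2, List.getElem?_drop,
          List.getElem?_append_right (by simp; omega), List.getElem?_replicate,
          if_pos (by simp; omega)]
        by_cases hc : s.length + m ≤ 2 * n + 2
        · obtain ⟨j, hj, hje⟩ : ∃ j, j ≤ n ∧ s.length + m = n + 2 + j :=
            ⟨s.length + m - (n + 2), by omega, by omega⟩
          rw [hje, ← e3 j hj, show n + 3 + j = s.length + (m + 1) from by omega,
            hw (m + 1) (by omega), if_neg (by omega)]
        · by_cases hc2 : s.length + m = 2 * n + 3
          · rw [hc2, hb2, hbtrue]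
          · obtain ⟨j, hje⟩ : ∃ j, s.length + m = 2 * n + 4 + j :=
              ⟨s.length + m - (2 * n + 4), by omega⟩
            rw [hje, ← e4 j, ← hje, hw m (by omega), if_neg (by omega)]
      · rw [if_neg h2, List.getElem?_eq_none (by simp; omega)]
  rw [key]
  exact ((List.take_prefix _ _).isInfix).trans ((List.drop_suffix _ _).isInfix)
end

section
/- The generalized Fibonacci cubes Q_6(0110) and Q_6(0100) are not isomorphic, even though ν(0110) = ν(0100) = 2. -/
instance inst_s19 (v w : List Bool) : Decidable (cubeRel v w) := by unfold cubeRel; infer_instance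

instance (d : ℕ) (f : List Bool) : DecidableRel (genFib d f).Adj := fun v w =>
  decidable_of_iff _ (SimpleGraph.fromRel_adj _ v w).symm

/-- Identification of the vertex set with a subtype of vectors, to get a `Fintype`. -/
def vecEquiv (d : ℕ) (f : List Bool) :
    {v : List.Vector Bool d // ¬ f <:+: v.toList} ≃
      {w : List Bool // w.length = d ∧ ¬ f <:+: w} where
  toFun v := ⟨v.1.toList, v.1.2, v.2⟩
  invFun w := ⟨⟨w.1, w.2.1⟩, w.2.2⟩
  left_inv _ := rfl
  right_inv _ := rfl

instance (d : ℕ) (f : List Bool) : Fintype {w : List Bool // w.length = d ∧ ¬ f <:+: w} :=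
  Fintype.ofEquiv _ (vecEquiv d f)

set_option maxRecDepth 40000 in
lemma cardG : Fintype.card
    {p : ({w : List Bool // w.length = 6 ∧ ¬ [false,true,true,false] <:+: w}) ×
         ({w : List Bool // w.length = 6 ∧ ¬ [false,true,true,false] <:+: w}) //
      (genFib 6 [false,true,true,false]).Adj p.1 p.2} = 264 := by decide

set_option maxRecDepth 40000 in
lemma cardH : Fintype.card
    {p : ({w : List Bool // w.length = 6 ∧ ¬ [false,true,false,false] <:+: w}) ×
         ({w : List Bool // w.length = 6 ∧ ¬ [false,true,false,false] <:+: w}) //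
      (genFib 6 [false,true,false,false]).Adj p.1 p.2} = 266 := by decide

theorem stmt19 :
    ¬ Nonempty (genFib 6 [false, true, true, false] ≃g genFib 6 [false, true, false, false]) ∧
    nu [false, true, true, false] = 2 ∧ nu [false, true, false, false] = 2 := by
  refine ⟨?_, by decide, by decide⟩
  rintro ⟨φ⟩
  have e : {p : _ × _ // (genFib 6 [false,true,true,false]).Adj p.1 p.2} ≃
      {p : _ × _ // (genFib 6 [false,true,false,false]).Adj p.1 p.2} :=
    Equiv.subtypeEquiv (Equiv.prodCongr φ.toEquiv φ.toEquiv)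
      (fun p => φ.map_rel_iff.symm)
  have := (Fintype.card_congr e)
  rw [cardG, cardH] at this
  exact absurd this (by norm_num)
end
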